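/- arXiv:1511.02888 — 8 statements merged into one kernel-verified Lean document; each statement's English description precedes it below -/
import Mathlib

section
/- If (a_k) and (b_k) are nonnegative log-concave sequences with no internal zeros, then their convolution c_n = Σ_{k} a_k b_{n-k} is log-concave. -/
/-- Extend a sequence on `ℕ` to `ℤ` by zero on negatives. -/
noncomputable def extSeq (b : ℕ → ℝ) : ℤ → ℝ := fun m => if 0 ≤ m then b m.toNat else 0

lemma extSeq_nonneg (b : ℕ → ℝ) (hb0 : ∀ k, 0 ≤ b k) (m : ℤ) : 0 ≤ extSeq b m := by
  unfold extSeq; split <;> simp [hb0]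

lemma extSeq_coe (b : ℕ → ℝ) (m : ℕ) : extSeq b (m : ℤ) = b m := by
  simp [extSeq]

lemma extSeq_neg (b : ℕ → ℝ) (m : ℤ) (hm : m < 0) : extSeq b m = 0 := by
  simp [extSeq, not_le.mpr hm]

/-- The cross inequality for log-concave sequences without internal zeros. -/
lemma cross_nat (a : ℕ → ℝ) (ha0 : ∀ k, 0 ≤ a k)
    (halc : ∀ k, 1 ≤ k → a (k - 1) * a (k + 1) ≤ a k ^ 2)
    (haniz : ∀ i j k, i ≤ j → j ≤ k → a i ≠ 0 → a k ≠ 0 → a j ≠ 0)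
    (i j : ℕ) (hij : i ≤ j) : a i * a (j + 1) ≤ a (i + 1) * a j := by
  induction j, hij using Nat.le_induction with
  | base => exact (mul_comm _ _).le
  | succ j hij ih =>
    have h2 : a j * a (j + 2) ≤ a (j + 1) ^ 2 := by
      have := halc (j + 1) (by omega)
      simpa using this
    rcases eq_or_lt_of_le (ha0 (j + 1)) with h0 | hpos
    · have hz : a i * a (j + 2) = 0 := by
        by_contra h
        have hi : a i ≠ 0 := fun h' => h (by simp [h'])
        have hj2 : a (j + 2) ≠ 0 := fun h' => h (by simp [h'])
        exact haniz i (j + 1) (j + 2) (by omega) (by omega) hi hj2 h0.symm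
      have : a i * (a (j + 1 + 1)) = 0 := by simpa using hz
      rw [this]
      exact mul_nonneg (ha0 _) (ha0 _)
    · have key : a (j + 1) * (a i * a (j + 2)) ≤ a (j + 1) * (a (i + 1) * a (j + 1)) := by
        calc a (j + 1) * (a i * a (j + 2)) = a i * a (j + 1) * a (j + 2) := by ring
          _ ≤ a (i + 1) * a j * a (j + 2) := mul_le_mul_of_nonneg_right ih (ha0 _)
          _ = a (i + 1) * (a j * a (j + 2)) := by ring
          _ ≤ a (i + 1) * a (j + 1) ^ 2 := mul_le_mul_of_nonneg_left h2 (ha0 _)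
          _ = a (j + 1) * (a (i + 1) * a (j + 1)) := by ring
      have := le_of_mul_le_mul_left key hpos
      simpa using this

/-- The cross inequality, extended to `ℤ`. -/
lemma cross_int (a : ℕ → ℝ) (ha0 : ∀ k, 0 ≤ a k)
    (halc : ∀ k, 1 ≤ k → a (k - 1) * a (k + 1) ≤ a k ^ 2)
    (haniz : ∀ i j k, i ≤ j → j ≤ k → a i ≠ 0 → a k ≠ 0 → a j ≠ 0)
    (i j : ℤ) (hij : i ≤ j) :
    extSeq a i * extSeq a (j + 1) ≤ extSeq a (i + 1) * extSeq a j := by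
  by_cases hi : 0 ≤ i
  · obtain ⟨i', rfl⟩ := Int.eq_ofNat_of_zero_le hi
    obtain ⟨j', rfl⟩ := Int.eq_ofNat_of_zero_le (le_trans hi hij)
    have hij' : i' ≤ j' := by exact_mod_cast hij
    have e1 : ((j' : ℤ) + 1) = ((j' + 1 : ℕ) : ℤ) := by push_cast; ring
    have e2 : ((i' : ℤ) + 1) = ((i' + 1 : ℕ) : ℤ) := by push_cast; ring
    rw [e1, e2, extSeq_coe, extSeq_coe, extSeq_coe, extSeq_coe]
    exact cross_nat a ha0 halc haniz i' j' hij'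
  · rw [extSeq_neg a i (by omega)]
    simpa using mul_nonneg (extSeq_nonneg a ha0 (i + 1)) (extSeq_nonneg a ha0 j)

/-- Reindexing the truncated convolution sum. -/
lemma conv_sum_eq (a b : ℕ → ℝ) (N m : ℕ) (hm : m ≤ N) :
    ∑ k ∈ Finset.range (N + 1), a k * extSeq b ((m : ℤ) - k)
      = ∑ k ∈ Finset.range (m + 1), a k * b (m - k) := by
  rw [← Finset.sum_subset (Finset.range_subset_range.mpr (by omega : m + 1 ≤ N + 1))
      (fun x hx hx' => ?_)]
  · apply Finset.sum_congr rfl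
    intro k hk
    have hk' : k ≤ m := by simpa [Nat.lt_succ_iff] using hk
    have : ((m : ℤ) - k) = ((m - k : ℕ) : ℤ) := by omega
    rw [this, extSeq_coe]
  · have hx2 : m < x := by simp at hx'; omega
    rw [extSeq_neg b _ (by omega), mul_zero]

/-- If `(a_k)` and `(b_k)` are nonnegative log-concave sequences with no
internal zeros, then their convolution `c_n = Σ_k a_k b_{n-k}` is log-concave. -/
theorem logConcave_convolution (a b : ℕ → ℝ)
    (ha0 : ∀ k, 0 ≤ a k) (hb0 : ∀ k, 0 ≤ b k)
    (halc : ∀ k, 1 ≤ k → a (k - 1) * a (k + 1) ≤ a k ^ 2)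
    (hblc : ∀ k, 1 ≤ k → b (k - 1) * b (k + 1) ≤ b k ^ 2)
    (haniz : ∀ i j k, i ≤ j → j ≤ k → a i ≠ 0 → a k ≠ 0 → a j ≠ 0)
    (hbniz : ∀ i j k, i ≤ j → j ≤ k → b i ≠ 0 → b k ≠ 0 → b j ≠ 0) :
    ∀ n, 1 ≤ n →
      (∑ k ∈ Finset.range n, a k * b (n - 1 - k)) *
        (∑ k ∈ Finset.range (n + 2), a k * b (n + 1 - k)) ≤
      (∑ k ∈ Finset.range (n + 1), a k * b (n - k)) ^ 2 := by
  intro n hn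
  set A : ℤ → ℝ := extSeq a with hA
  set B : ℤ → ℝ := extSeq b with hB
  have crossA := cross_int a ha0 halc haniz
  have crossB := cross_int b hb0 hblc hbniz
  set R := Finset.range (n + 3) with hR
  set w : ℕ → ℝ := fun k => A ((k : ℤ) - 1) * B ((n : ℤ) + 1 - k) with hw
  set x : ℕ → ℝ := fun k => A ((k : ℤ) - 1) * B ((n : ℤ) - k) with hx
  set y : ℕ → ℝ := fun k => A (k : ℤ) * B ((n : ℤ) + 1 - k) with hy
  set z : ℕ → ℝ := fun k => A (k : ℤ) * B ((n : ℤ) - k) with hz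
  -- sum identifications
  have hsw : ∑ k ∈ R, w k = ∑ k ∈ Finset.range (n + 1), a k * b (n - k) := by
    rw [hR, Finset.sum_range_succ' w]
    have h0 : w 0 = 0 := by
      simp only [hw, hA]
      rw [extSeq_neg a _ (by norm_num)]
      ring
    rw [h0, add_zero]
    have : ∀ k ∈ Finset.range (n + 2), w (k + 1) = a k * extSeq b ((n : ℤ) - k) := by
      intro k hk
      simp only [hw, hA, hB]
      have e1 : ((k + 1 : ℕ) : ℤ) - 1 = (k : ℤ) := by push_cast; ring
      have e2 : ((n : ℤ) + 1 - ((k + 1 : ℕ) : ℤ)) = (n : ℤ) - k := by push_cast; ring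
      rw [e1, e2, extSeq_coe]
    rw [Finset.sum_congr rfl this]
    exact conv_sum_eq a b (n + 1) n (by omega)
  have hsz : ∑ k ∈ R, z k = ∑ k ∈ Finset.range (n + 1), a k * b (n - k) := by
    have : ∀ k ∈ R, z k = a k * extSeq b ((n : ℤ) - k) := by
      intro k hk
      simp only [hz, hA, hB, extSeq_coe]
    rw [Finset.sum_congr rfl this, hR]
    exact conv_sum_eq a b (n + 2) n (by omega)
  have hsy : ∑ k ∈ R, y k = ∑ k ∈ Finset.range (n + 2), a k * b (n + 1 - k) := by
    have : ∀ k ∈ R, y k = a k * extSeq b (((n + 1 : ℕ) : ℤ) - k) := by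
      intro k hk
      simp only [hy, hA, hB, extSeq_coe]
      push_cast
      ring_nf
    rw [Finset.sum_congr rfl this, hR]
    exact conv_sum_eq a b (n + 2) (n + 1) (by omega)
  have hsx : ∑ k ∈ R, x k = ∑ k ∈ Finset.range n, a k * b (n - 1 - k) := by
    rw [hR, Finset.sum_range_succ' x]
    have h0 : x 0 = 0 := by
      simp only [hx, hA]
      rw [extSeq_neg a _ (by norm_num)]
      ring
    rw [h0, add_zero]
    have : ∀ k ∈ Finset.range (n + 2), x (k + 1) = a k * extSeq b (((n - 1 : ℕ) : ℤ) - k) := by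
      intro k hk
      simp only [hx, hA, hB]
      have e1 : ((k + 1 : ℕ) : ℤ) - 1 = (k : ℤ) := by push_cast; ring
      have e2 : ((n : ℤ) - ((k + 1 : ℕ) : ℤ)) = ((n - 1 : ℕ) : ℤ) - k := by
        push_cast [Nat.cast_sub hn]; ring
      rw [e1, e2, extSeq_coe]
    rw [Finset.sum_congr rfl this]
    have := conv_sum_eq a b (n + 1) (n - 1) (by omega)
    rw [this]
    have hrn : n - 1 + 1 = n := by omega
    rw [hrn]
  -- the termwise nonnegativity
  have hterm : ∀ k l : ℕ, 0 ≤ (w k * z l - x k * y l) + (w l * z k - x l * y k) := by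
    intro k l
    have hid : (w k * z l - x k * y l) + (w l * z k - x l * y k)
        = (A ((k : ℤ) - 1) * A (l : ℤ) - A ((l : ℤ) - 1) * A (k : ℤ)) *
          (B ((n : ℤ) + 1 - k) * B ((n : ℤ) - l) - B ((n : ℤ) - k) * B ((n : ℤ) + 1 - l)) := by
      simp only [hw, hx, hy, hz]; ring
    rw [hid]
    rcases le_total (k : ℤ) (l : ℤ) with hkl | hkl
    · have h1 : A ((k : ℤ) - 1) * A (l : ℤ) - A ((l : ℤ) - 1) * A (k : ℤ) ≤ 0 := by
        have := crossA ((k : ℤ) - 1) ((l : ℤ) - 1) (by omega)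
        have e1 : ((l : ℤ) - 1 + 1) = (l : ℤ) := by ring
        have e2 : ((k : ℤ) - 1 + 1) = (k : ℤ) := by ring
        rw [e1, e2] at this
        linarith
      have h2 : B ((n : ℤ) + 1 - k) * B ((n : ℤ) - l) - B ((n : ℤ) - k) * B ((n : ℤ) + 1 - l) ≤ 0 := by
        have := crossB ((n : ℤ) - l) ((n : ℤ) - k) (by omega)
        have e1 : ((n : ℤ) - k + 1) = (n : ℤ) + 1 - k := by ring
        have e2 : ((n : ℤ) - l + 1) = (n : ℤ) + 1 - l := by ring
        rw [e1, e2] at this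
        linarith
      exact mul_nonneg_of_nonpos_of_nonpos h1 h2
    · have h1 : 0 ≤ A ((k : ℤ) - 1) * A (l : ℤ) - A ((l : ℤ) - 1) * A (k : ℤ) := by
        have := crossA ((l : ℤ) - 1) ((k : ℤ) - 1) (by omega)
        have e1 : ((k : ℤ) - 1 + 1) = (k : ℤ) := by ring
        have e2 : ((l : ℤ) - 1 + 1) = (l : ℤ) := by ring
        rw [e1, e2] at this
        linarith
      have h2 : 0 ≤ B ((n : ℤ) + 1 - k) * B ((n : ℤ) - l) - B ((n : ℤ) - k) * B ((n : ℤ) + 1 - l) := by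
        have := crossB ((n : ℤ) - k) ((n : ℤ) - l) (by omega)
        have e1 : ((n : ℤ) - l + 1) = (n : ℤ) + 1 - l := by ring
        have e2 : ((n : ℤ) - k + 1) = (n : ℤ) + 1 - k := by ring
        rw [e1, e2] at this
        linarith
      exact mul_nonneg h1 h2
  -- assemble
  have hdouble : (∑ k ∈ R, w k) * (∑ l ∈ R, z l) - (∑ k ∈ R, x k) * (∑ l ∈ R, y l)
      = ∑ k ∈ R, ∑ l ∈ R, (w k * z l - x k * y l) := by
    rw [Finset.sum_mul_sum, Finset.sum_mul_sum]
    rw [← Finset.sum_sub_distrib]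
    apply Finset.sum_congr rfl
    intro k hk
    rw [← Finset.sum_sub_distrib]
  have hswap : ∑ k ∈ R, ∑ l ∈ R, (w l * z k - x l * y k)
      = ∑ k ∈ R, ∑ l ∈ R, (w k * z l - x k * y l) := Finset.sum_comm
  have hS2 : 0 ≤ ∑ k ∈ R, ∑ l ∈ R, ((w k * z l - x k * y l) + (w l * z k - x l * y k)) :=
    Finset.sum_nonneg fun k _ => Finset.sum_nonneg fun l _ => hterm k l
  have hsplit : ∑ k ∈ R, ∑ l ∈ R, ((w k * z l - x k * y l) + (w l * z k - x l * y k))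
      = (∑ k ∈ R, ∑ l ∈ R, (w k * z l - x k * y l))
        + (∑ k ∈ R, ∑ l ∈ R, (w l * z k - x l * y k)) := by
    simp [Finset.sum_add_distrib]
  have hSnn : 0 ≤ ∑ k ∈ R, ∑ l ∈ R, (w k * z l - x k * y l) := by
    rw [hsplit, hswap] at hS2
    linarith
  rw [hsw, hsz, hsx, hsy] at hdouble
  rw [sq]
  linarith [hdouble, hSnn]
end

section
/- For the truncation tr(M) of a loopless matroid M of rank r+1, and any nonnegative integer k < r, the k-th coefficient of the reduced characteristic polynomial satisfies μ^k(M) = μ^k(tr(M)). -/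
open Finset

/-- A matroid on a finite ground set, given by its rank function. -/
structure FinMatroid (E : Type*) [DecidableEq E] [Fintype E] where
  rk : Finset E → ℕ
  rk_empty : rk ∅ = 0
  rk_le_card : ∀ I, rk I ≤ I.card
  rk_mono : ∀ ⦃I J⦄, I ⊆ J → rk I ≤ rk J
  rk_submodular : ∀ I J, rk (I ∪ J) + rk (I ∩ J) ≤ rk I + rk J

namespace FinMatroid

variable {E : Type*} [DecidableEq E] [Fintype E]

/-- A matroid is loopless if every singleton has rank one. -/
def Loopless (M : FinMatroid E) : Prop := ∀ e : E, M.rk {e} = 1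

/-- A flat of a matroid: a closed set, i.e. adding any new element increases the rank. -/
def IsFlat (M : FinMatroid E) (F : Finset E) : Prop :=
  ∀ e ∉ F, M.rk F < M.rk (insert e F)

/-- The characteristic polynomial `χ_M(λ) = Σ_{I ⊆ E} (-1)^{|I|} λ^{crk I}`. -/
noncomputable def charPoly (M : FinMatroid E) : Polynomial ℤ :=
  ∑ I ∈ (Finset.univ : Finset E).powerset,
    Polynomial.C ((-1 : ℤ) ^ I.card) * Polynomial.X ^ (M.rk Finset.univ - M.rk I)

/-- The reduced characteristic polynomial `χ̄_M(λ) = χ_M(λ)/(λ-1)`. -/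
noncomputable def redCharPoly (M : FinMatroid E) : Polynomial ℤ :=
  M.charPoly /ₘ (Polynomial.X - 1)

end FinMatroid


open Polynomial in
theorem FinMatroid.eval_one' {E : Type*} [DecidableEq E] [Fintype E] (M : FinMatroid E)
    (hE : (Finset.univ : Finset E).Nonempty) : M.charPoly.eval 1 = 0 := by
  simp only [FinMatroid.charPoly, eval_finset_sum, eval_mul, eval_C, eval_pow, eval_X, one_pow,
    mul_one]
  exact Finset.sum_powerset_neg_one_pow_card_of_nonempty hE

open Polynomial in
theorem FinMatroid.char_eq' {E : Type*} [DecidableEq E] [Fintype E] (M : FinMatroid E)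
    (hE : (Finset.univ : Finset E).Nonempty) : M.charPoly = (X - 1) * M.redCharPoly := by
  have h := Polynomial.modByMonic_add_div M.charPoly (q := X - 1)
  have hm : M.charPoly %ₘ (X - 1) = 0 := by
    have := Polynomial.modByMonic_X_sub_C_eq_C_eval M.charPoly 1
    rw [map_one] at this
    rw [this, M.eval_one' hE, map_zero]
  rw [hm, zero_add] at h
  exact h.symm

/-- For the truncation `tr(M)` (the matroid with rank function
`I ↦ min (rk_M I) r`) of a loopless matroid `M` of rank `r+1 ≥ 2`, and any `k < r`,
the `k`-th coefficient of the reduced characteristic polynomial is unchanged: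
`μ^k(M) = μ^k(tr(M))`.  Since `χ̄_M` has degree `r` and `χ̄_{tr(M)}` has degree `r-1`,
this says that the coefficient of `λ^{r-k}` in `χ̄_M` equals the coefficient of
`λ^{(r-1)-k}` in `χ̄_{tr(M)}`. -/
theorem truncation_mu_eq {E : Type*} [DecidableEq E] [Fintype E]
    (M N : FinMatroid E) (r : ℕ) (hr : 1 ≤ r)
    (hM : M.Loopless) (hrk : M.rk Finset.univ = r + 1)
    (hN : ∀ I, N.rk I = min (M.rk I) r) :
    ∀ k < r, M.redCharPoly.coeff (r - k) = N.redCharPoly.coeff (r - 1 - k) := by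
  classical
  open Polynomial in
  have hE : (Finset.univ : Finset E).Nonempty := by
    by_contra h
    rw [Finset.not_nonempty_iff_eq_empty] at h
    rw [h, M.rk_empty] at hrk; omega
  open Polynomial in
  set c : ℤ := ∑ I ∈ (Finset.univ : Finset E).powerset.filter (fun I => M.rk I = r + 1),
    (-1 : ℤ) ^ I.card with hc
  have hNuniv : N.rk Finset.univ = r := by rw [hN, hrk]; omega
  open Polynomial in
  have key : M.charPoly = X * N.charPoly + (1 - X) * C c := by
    rw [FinMatroid.charPoly, FinMatroid.charPoly, Finset.mul_sum, hc, map_sum, Finset.mul_sum,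
      Finset.sum_filter, ← Finset.sum_add_distrib]
    refine Finset.sum_congr rfl fun I _ => ?_
    have hle : M.rk I ≤ r + 1 := hrk ▸ M.rk_mono (Finset.subset_univ I)
    rw [hrk, hNuniv, hN]
    by_cases h : M.rk I = r + 1
    · rw [if_pos h, h]
      have h3 : r + 1 - (r + 1) = 0 := by omega
      have h4 : r - min (r + 1) r = 0 := by omega
      rw [h3, h4, pow_zero]
      ring
    · rw [if_neg h]
      have h1 : min (M.rk I) r = M.rk I := by omega
      have h2 : r - M.rk I + 1 = r + 1 - M.rk I := by omega
      rw [h1, add_zero, ← mul_assoc, mul_comm X (C _), mul_assoc,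
        show (X : Polynomial ℤ) * X ^ (r - M.rk I) = X ^ (r - M.rk I + 1) by ring, h2]
  open Polynomial in
  have hred : M.redCharPoly = X * N.redCharPoly - C c := by
    have hmono : (X - 1 : Polynomial ℤ).Monic := by
      simpa using Polynomial.monic_X_sub_C (1 : ℤ)
    have : M.charPoly = (X - 1) * (X * N.redCharPoly - C c) := by
      rw [key, N.char_eq' hE]; ring
    rw [FinMatroid.redCharPoly, this, Polynomial.mul_divByMonic_cancel_left _ hmono]
  intro k hk
  rw [hred, Polynomial.coeff_sub, Polynomial.coeff_C]
  have h1 : r - k = (r - 1 - k) + 1 := by omega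
  rw [h1, Polynomial.coeff_X_mul, if_neg (by omega), sub_zero]
end

section
/- All coefficients μ^k(M) of the reduced characteristic polynomial of a loopless matroid are positive; equivalently, the absolute values of the coefficients of χ̄_M(λ) alternate in sign and are nonzero. -/
open Finset

open Polynomial

namespace FinMatroid

variable {E : Type*} [DecidableEq E] [Fintype E]

-- auxiliary lemmas
lemma rk_insert_le (M : FinMatroid E) (e : E) (I : Finset E) :
    M.rk (insert e I) ≤ M.rk I + M.rk {e} := by
  have h := M.rk_submodular I {e}
  have h2 : I ∪ {e} = insert e I := by
    ext x; simp [or_comm]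
  rw [h2] at h
  omega

lemma rk_singleton_le_insert (M : FinMatroid E) (e : E) (I : Finset E) :
    M.rk {e} ≤ M.rk (insert e I) :=
  M.rk_mono (by simp)

/-- Contraction of a matroid by an element. -/
def contract (M : FinMatroid E) (e : E) : FinMatroid E where
  rk I := M.rk (insert e I) - M.rk {e}
  rk_empty := by simp
  rk_le_card I := by
    show M.rk (insert e I) - M.rk {e} ≤ I.card
    have h := M.rk_insert_le e I
    have := M.rk_le_card I
    omega
  rk_mono I J hIJ := by
    show M.rk (insert e I) - M.rk {e} ≤ M.rk (insert e J) - M.rk {e}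
    have := M.rk_mono (insert_subset_insert e hIJ)
    omega
  rk_submodular I J := by
    show M.rk (insert e (I ∪ J)) - M.rk {e} + (M.rk (insert e (I ∩ J)) - M.rk {e}) ≤
      (M.rk (insert e I) - M.rk {e}) + (M.rk (insert e J) - M.rk {e})
    have h1 : insert e I ∪ insert e J = insert e (I ∪ J) := by
      ext x; simp only [mem_union, mem_insert]; tauto
    have h2 : insert e I ∩ insert e J = insert e (I ∩ J) := by
      ext x; simp only [mem_inter, mem_insert]; tauto
    have h := M.rk_submodular (insert e I) (insert e J)
    rw [h1, h2] at h
    have hA := M.rk_singleton_le_insert e (I ∪ J)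
    have hB := M.rk_singleton_le_insert e (I ∩ J)
    have hC := M.rk_singleton_le_insert e I
    have hD := M.rk_singleton_le_insert e J
    omega

/-- Characteristic polynomial restricted to a ground set `G`. -/
noncomputable def charPolyOn (M : FinMatroid E) (G : Finset E) : Polynomial ℤ :=
  ∑ I ∈ G.powerset, C ((-1 : ℤ) ^ I.card) * X ^ (M.rk G - M.rk I)

lemma charPoly_eq (M : FinMatroid E) : M.charPoly = M.charPolyOn Finset.univ := rfl

lemma natDegree_charPolyOn_le (M : FinMatroid E) (G : Finset E) :
    (M.charPolyOn G).natDegree ≤ M.rk G := by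
  refine natDegree_le_iff_degree_le.2 ?_
  refine (degree_sum_le _ _).trans ?_
  refine Finset.sup_le fun I hI => ?_
  refine (degree_C_mul_X_pow_le _ _).trans ?_
  exact_mod_cast Nat.cast_le.2 (Nat.sub_le _ _)

lemma eval_one_charPolyOn (M : FinMatroid E) {G : Finset E} (hG : G.Nonempty) :
    (M.charPolyOn G).eval 1 = 0 := by
  unfold charPolyOn
  rw [eval_finset_sum]
  simp only [eval_mul, eval_C, eval_pow, eval_X, one_pow, mul_one]
  exact Finset.sum_powerset_neg_one_pow_card_of_nonempty hG

lemma charPolyOn_factor (M : FinMatroid E) {G : Finset E} (hG : G.Nonempty) :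
    M.charPolyOn G = (X - 1) * (M.charPolyOn G /ₘ (X - 1)) := by
  have h1 : (X - 1 : Polynomial ℤ) = X - C 1 := by simp
  have h := modByMonic_add_div (M.charPolyOn G) (X - C (1 : ℤ))
  rw [← h1] at h
  rw [h1, modByMonic_X_sub_C_eq_C_eval, M.eval_one_charPolyOn hG] at h
  rw [← h1] at h
  simpa using h.symm


/-- If the ground set contains a loop, the characteristic polynomial vanishes. -/
lemma charPolyOn_eq_zero_of_loop (M : FinMatroid E) {G : Finset E} {f : E}
    (hf : f ∈ G) (h0 : M.rk {f} = 0) : M.charPolyOn G = 0 := by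
  have hG : G = insert f (G.erase f) := (insert_erase hf).symm
  have hfe : f ∉ G.erase f := notMem_erase f G
  unfold charPolyOn
  rw [hG, Finset.sum_powerset_insert hfe]
  rw [← Finset.sum_add_distrib]
  refine Finset.sum_eq_zero fun I hI => ?_
  have hfI : f ∉ I := fun h => hfe (mem_powerset.1 hI h)
  have hrk : M.rk (insert f I) = M.rk I := by
    have h1 := M.rk_insert_le f I
    have h2 : M.rk I ≤ M.rk (insert f I) := M.rk_mono (subset_insert f I)
    omega
  rw [card_insert_of_notMem hfI, hrk, pow_succ]
  simp only [map_mul, map_neg, map_one, C_1]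
  ring

/-- Deletion-contraction for the characteristic polynomial. -/
lemma charPolyOn_delete_contract (M : FinMatroid E) {G : Finset E} {e : E}
    (he : e ∈ G) (h1 : M.rk {e} = 1) (hdel : M.rk (G.erase e) = M.rk G) :
    M.charPolyOn G = M.charPolyOn (G.erase e) - (M.contract e).charPolyOn (G.erase e) := by
  have hG : G = insert e (G.erase e) := (insert_erase he).symm
  have hfe : e ∉ G.erase e := notMem_erase e G
  unfold charPolyOn
  rw [hG, Finset.sum_powerset_insert hfe, ← hG]
  have hA : ∀ I ∈ (G.erase e).powerset,
      C ((-1 : ℤ) ^ I.card) * X ^ (M.rk G - M.rk I)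
        = C ((-1 : ℤ) ^ I.card) * X ^ (M.rk (G.erase e) - M.rk I) := by
    intro I hI; rw [hdel]
  have hB : ∀ I ∈ (G.erase e).powerset,
      C ((-1 : ℤ) ^ (insert e I).card) * X ^ (M.rk G - M.rk (insert e I))
        = -(C ((-1 : ℤ) ^ I.card) *
            X ^ ((M.contract e).rk (G.erase e) - (M.contract e).rk I)) := by
    intro I hI
    have hfI : e ∉ I := fun h => hfe (mem_powerset.1 hI h)
    have hins : insert e (G.erase e) = G := insert_erase he
    have hck : (M.contract e).rk (G.erase e) = M.rk G - 1 := by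
      show M.rk (insert e (G.erase e)) - M.rk {e} = M.rk G - 1
      rw [hins, h1]
    have hcI : (M.contract e).rk I = M.rk (insert e I) - 1 := by
      show M.rk (insert e I) - M.rk {e} = M.rk (insert e I) - 1
      rw [h1]
    have hle : M.rk (insert e I) ≤ M.rk G := by
      refine M.rk_mono ?_
      rw [← hins]
      exact insert_subset_insert e (mem_powerset.1 hI)
    have hge : 1 ≤ M.rk (insert e I) := h1 ▸ M.rk_singleton_le_insert e I
    have hexp : M.rk G - M.rk (insert e I)
        = (M.contract e).rk (G.erase e) - (M.contract e).rk I := by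
      rw [hck, hcI]; omega
    rw [hexp, card_insert_of_notMem hfI, pow_succ]
    simp only [map_mul, map_neg, map_one, C_1]
    ring
  rw [Finset.sum_congr rfl hA, Finset.sum_congr rfl hB, Finset.sum_neg_distrib]
  ring

/-- If `e` is a coloop, the characteristic polynomial factors. -/
lemma charPolyOn_coloop (M : FinMatroid E) {G : Finset E} {e : E}
    (he : e ∈ G) (h1 : M.rk {e} = 1) (hdel : M.rk (G.erase e) + 1 = M.rk G) :
    M.charPolyOn G = (X - 1) * M.charPolyOn (G.erase e) := by
  have hG : G = insert e (G.erase e) := (insert_erase he).symm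
  have hfe : e ∉ G.erase e := notMem_erase e G
  unfold charPolyOn
  rw [hG, Finset.sum_powerset_insert hfe, ← hG, Finset.mul_sum, ← Finset.sum_add_distrib]
  refine Finset.sum_congr rfl fun I hI => ?_
  have hfI : e ∉ I := fun h => hfe (mem_powerset.1 hI h)
  have hIsub : I ⊆ G.erase e := mem_powerset.1 hI
  have hins : M.rk (insert e I) = M.rk I + 1 := by
    have hup := M.rk_insert_le e I
    have hsub := M.rk_submodular (insert e I) (G.erase e)
    have hU : insert e I ∪ G.erase e = G := by
      rw [insert_union, union_eq_right.2 hIsub, insert_erase he]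
    have hInt : insert e I ∩ G.erase e = I := by
      ext x
      simp only [mem_inter, mem_insert]
      constructor
      · rintro ⟨hx1 | hx1, hx2⟩
        · exact absurd hx2 (hx1 ▸ hfe)
        · exact hx1
      · intro hx; exact ⟨Or.inr hx, hIsub hx⟩
    rw [hU, hInt] at hsub
    omega
  have hrkI : M.rk I ≤ M.rk (G.erase e) := M.rk_mono hIsub
  have hexp : M.rk G - M.rk (insert e I) = M.rk (G.erase e) - M.rk I := by omega
  have hexp2 : M.rk G - M.rk I = (M.rk (G.erase e) - M.rk I) + 1 := by omega
  rw [hexp, hexp2, card_insert_of_notMem hfI, pow_succ, pow_succ]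
  simp only [map_mul, map_neg, map_one, C_1]
  ring


lemma sub_divByMonic' (p₁ p₂ q : Polynomial ℤ) (hq : q.Monic) :
    (p₁ - p₂) /ₘ q = p₁ /ₘ q - p₂ /ₘ q := by
  have h1 := modByMonic_add_div p₁ q
  have h2 := modByMonic_add_div p₂ q
  have h3 := modByMonic_add_div (p₁ - p₂) q
  have h4 := sub_modByMonic p₁ p₂ q
  apply mul_left_cancel₀ hq.ne_zero
  rw [mul_sub]
  linear_combination h3 - h1 + h2 - h4

lemma monic_XsubOne : (X - 1 : Polynomial ℤ).Monic := by
  simpa using monic_X_sub_C (1 : ℤ)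

lemma coeff_red_eq_zero (M : FinMatroid E) (G : Finset E) {j : ℕ}
    (h1 : M.rk G ≤ j) (h2 : 1 ≤ j) :
    ((M.charPolyOn G) /ₘ (X - 1)).coeff j = 0 := by
  apply coeff_eq_zero_of_natDegree_lt
  have hd := natDegree_divByMonic (M.charPolyOn G) monic_XsubOne
  have hX : (X - 1 : Polynomial ℤ).natDegree = 1 := by
    have : (X - 1 : Polynomial ℤ) = X - C 1 := by simp
    rw [this, natDegree_X_sub_C]
  rw [hX] at hd
  have := M.natDegree_charPolyOn_le G
  omega

lemma mu_pos_on (n : ℕ) : ∀ (M : FinMatroid E) (G : Finset E) (s : ℕ), G.card = n →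
    (∀ e ∈ G, M.rk {e} = 1) → M.rk G = s + 1 →
    ∀ k ≤ s, 0 < (-1 : ℤ) ^ k * ((M.charPolyOn G) /ₘ (X - 1)).coeff (s - k) := by
  induction n using Nat.strong_induction_on with
  | _ n IH =>
  intro M G s hcard hl hrk k hk
  have hGne : G.Nonempty := by
    rcases G.eq_empty_or_nonempty with h | h
    · rw [h, M.rk_empty] at hrk; omega
    · exact h
  by_cases hpar : ∃ e ∈ G, ∃ f ∈ G, e ≠ f ∧ M.rk {e, f} ≤ 1
  · -- parallel pair: delete e, contraction has a loop
    obtain ⟨e, he, f, hf, hef, hr⟩ := hpar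
    have hf1 : M.rk {f} = 1 := hl f hf
    have hfe : f ∈ G.erase e := mem_erase.2 ⟨fun h => hef h.symm, hf⟩
    have hr1 : M.rk {e, f} = 1 := by
      have : M.rk {f} ≤ M.rk {e, f} := M.rk_mono (by intro x hx; simp at hx; simp [hx])
      omega
    have hdel : M.rk (G.erase e) = M.rk G := by
      have hsub := M.rk_submodular (G.erase e) {e, f}
      have hU : G.erase e ∪ {e, f} = G := by
        ext x
        simp only [mem_union, mem_erase, mem_insert, mem_singleton]
        constructor
        · rintro (⟨-, h⟩ | h | h) <;> simp_all
        · intro hx; by_cases hxe : x = e <;> tauto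
      have hI : {f} ⊆ G.erase e ∩ {e, f} := by
        intro x hx; simp at hx; subst hx; simp [hfe]
      have := M.rk_mono hI
      have hmono := M.rk_mono (erase_subset e G)
      rw [hU] at hsub
      omega
    have hloop : (M.contract e).rk {f} = 0 := by
      show M.rk (insert e {f}) - M.rk {e} = 0
      rw [hl e he, hr1]
    have hzero : (M.contract e).charPolyOn (G.erase e) = 0 :=
      (M.contract e).charPolyOn_eq_zero_of_loop hfe hloop
    have hdc := M.charPolyOn_delete_contract he (hl e he) hdel
    rw [hzero, sub_zero] at hdc
    rw [hdc]
    exact IH (G.erase e).card (hcard ▸ card_erase_lt_of_mem he) M (G.erase e) s rfl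
      (fun x hx => hl x (mem_of_mem_erase hx)) (by rw [hdel, hrk]) k hk
  · -- simple case
    push_neg at hpar
    obtain ⟨e, he⟩ := hGne
    have he1 : M.rk {e} = 1 := hl e he
    by_cases hcol : M.rk (G.erase e) = M.rk G
    · -- e is not a coloop: deletion-contraction
      have hdc := M.charPolyOn_delete_contract he he1 hcol
      -- the deletion is loopless of rank s+1 on smaller ground set
      have hdelrank : M.rk (G.erase e) = s + 1 := by rw [hcol, hrk]
      have hGene : (G.erase e).Nonempty := by
        rcases (G.erase e).eq_empty_or_nonempty with h | h
        · rw [h, M.rk_empty] at hdelrank; omega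
        · exact h
      obtain ⟨f, hf⟩ := hGene
      have hfG : f ∈ G := mem_of_mem_erase hf
      have hfe : f ≠ e := (mem_erase.1 hf).1
      have hpair2 : 2 ≤ M.rk {e, f} := hpar e he f hfG (fun h => hfe h.symm)
      have hpairle : M.rk {e, f} ≤ 2 := by
        have := M.rk_le_card {e, f}
        have : ({e, f} : Finset E).card ≤ 2 := card_insert_le _ _ |>.trans (by simp)
        omega
      have hs1 : 1 ≤ s := by
        have : M.rk {e, f} ≤ M.rk G := M.rk_mono (by intro x hx; simp at hx; rcases hx with h|h <;> simp [h, he, hfG])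
        omega
      -- contraction is loopless of rank s on G.erase e
      have hcl : ∀ x ∈ G.erase e, (M.contract e).rk {x} = 1 := by
        intro x hx
        have hxG : x ∈ G := mem_of_mem_erase hx
        have hxe : x ≠ e := (mem_erase.1 hx).1
        show M.rk (insert e {x}) - M.rk {e} = 1
        have h2 : 2 ≤ M.rk {e, x} := hpar e he x hxG (fun h => hxe h.symm)
        have hle : M.rk {e, x} ≤ 2 := by
          have := M.rk_le_card {e, x}
          have : ({e, x} : Finset E).card ≤ 2 := card_insert_le _ _ |>.trans (by simp)
          omega
        have : insert e {x} = ({e, x} : Finset E) := rfl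
        rw [this, he1]
        omega
      have hcrank : (M.contract e).rk (G.erase e) = s := by
        show M.rk (insert e (G.erase e)) - M.rk {e} = s
        rw [insert_erase he, he1, hrk]
        omega
      rw [hdc, sub_divByMonic' _ _ _ monic_XsubOne]
      rw [coeff_sub, mul_sub]
      have hIH1 := IH (G.erase e).card (hcard ▸ card_erase_lt_of_mem he) M (G.erase e) s rfl
        (fun x hx => hl x (mem_of_mem_erase hx)) hdelrank k hk
      rcases Nat.eq_zero_or_pos k with hk0 | hkpos
      · subst hk0
        have hz : ((M.contract e).charPolyOn (G.erase e) /ₘ (X - 1)).coeff (s - 0) = 0 :=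
          (M.contract e).coeff_red_eq_zero (G.erase e) (by omega) (by omega)
        rw [hz]
        simpa using hIH1
      · have hIH2 := IH (G.erase e).card (hcard ▸ card_erase_lt_of_mem he) (M.contract e)
          (G.erase e) (s - 1) rfl hcl (by omega) (k - 1) (by omega)
        have hidx : s - 1 - (k - 1) = s - k := by omega
        rw [hidx] at hIH2
        obtain ⟨k, rfl⟩ : ∃ k', k = k' + 1 := ⟨k - 1, by omega⟩
        simp only [Nat.add_sub_cancel] at hIH2
        set A := (M.charPolyOn (G.erase e) /ₘ (X - 1)).coeff (s - (k + 1)) with hA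
        set B := ((M.contract e).charPolyOn (G.erase e) /ₘ (X - 1)).coeff (s - (k + 1)) with hB
        have : (-1 : ℤ) ^ (k + 1) * A - (-1) ^ (k + 1) * B
            = (-1) ^ (k + 1) * A + (-1) ^ k * B := by ring
        rw [this]
        exact add_pos hIH1 hIH2
    · -- e is a coloop
      have hdel : M.rk (G.erase e) + 1 = M.rk G := by
        have hle : M.rk (G.erase e) ≤ M.rk G := M.rk_mono (erase_subset e G)
        have hup : M.rk G ≤ M.rk (G.erase e) + 1 := by
          have h := M.rk_insert_le e (G.erase e)
          rw [insert_erase he, he1] at h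
          exact h
        omega
      have hdrank : M.rk (G.erase e) = s := by omega
      have hfac := M.charPolyOn_coloop he he1 hdel
      have hred : M.charPolyOn G /ₘ (X - 1) = M.charPolyOn (G.erase e) := by
        rw [hfac]
        have h1 : (X - 1 : Polynomial ℤ) = X - C 1 := by simp
        rw [h1, mul_divByMonic_cancel_left _ (monic_X_sub_C (1 : ℤ))]
      rw [hred]
      rcases Nat.eq_zero_or_pos s with hs0 | hspos
      · -- s = 0: G.erase e = ∅, charPolyOn = 1
        subst hs0
        interval_cases k
        have hempty : G.erase e = ∅ := by
          rcases (G.erase e).eq_empty_or_nonempty with h | h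
          · exact h
          · obtain ⟨f, hf⟩ := h
            have := hl f (mem_of_mem_erase hf)
            have := M.rk_mono (singleton_subset_iff.2 hf)
            omega
        rw [hempty]
        unfold charPolyOn
        simp
      · -- s ≥ 1: use factorization of the deletion
        have hGene : (G.erase e).Nonempty := by
          rcases (G.erase e).eq_empty_or_nonempty with h | h
          · rw [h, M.rk_empty] at hdrank; omega
          · exact h
        rw [M.charPolyOn_factor hGene]
        set P := M.charPolyOn (G.erase e) /ₘ (X - 1) with hP
        have hIHd : ∀ j ≤ s - 1, 0 < (-1 : ℤ) ^ j * P.coeff (s - 1 - j) :=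
          fun j hj => IH (G.erase e).card (hcard ▸ card_erase_lt_of_mem he) M (G.erase e)
            (s - 1) rfl (fun x hx => hl x (mem_of_mem_erase hx)) (by omega) j hj
        have hcoeff : ∀ m : ℕ, ((X - 1) * P).coeff m
            = (if m = 0 then 0 else P.coeff (m - 1)) - P.coeff m := by
          intro m
          rw [sub_mul, one_mul, coeff_sub]
          rcases Nat.eq_zero_or_pos m with h0 | hpos
          · subst h0
            simp [mul_coeff_zero]
          · obtain ⟨m, rfl⟩ : ∃ m', m = m' + 1 := ⟨m - 1, by omega⟩
            rw [coeff_X_mul]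
            simp
        rw [hcoeff]
        rcases Nat.lt_or_ge k s with hks | hks
        · -- k < s: index s - k ≥ 1
          have hne : s - k ≠ 0 := by omega
          rw [if_neg hne]
          rcases Nat.eq_zero_or_pos k with hk0 | hkpos
          · subst hk0
            have h1 := hIHd 0 (by omega)
            have h2 : P.coeff s = 0 :=
              M.coeff_red_eq_zero (G.erase e) (by omega) (by omega)
            simp only [Nat.sub_zero] at h1 ⊢
            rw [h2, sub_zero]
            exact h1
          · have h1 := hIHd k (by omega)
            have h2 := hIHd (k - 1) (by omega)
            have e1 : s - k - 1 = s - 1 - k := by omega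
            have e2 : s - 1 - (k - 1) = s - k := by omega
            rw [e1]
            rw [e2] at h2
            obtain ⟨k, rfl⟩ : ∃ k', k = k' + 1 := ⟨k - 1, by omega⟩
            simp only [Nat.add_sub_cancel] at h2
            have : (-1 : ℤ) ^ (k + 1) * (P.coeff (s - 1 - (k + 1)) - P.coeff (s - (k + 1)))
                = (-1) ^ (k + 1) * P.coeff (s - 1 - (k + 1)) + (-1) ^ k * P.coeff (s - (k + 1)) := by
              ring
            rw [this]
            exact add_pos h1 h2
        · -- k = s: index 0
          have hks' : k = s := by omega
          subst hks'
          rw [Nat.sub_self, if_pos rfl, zero_sub]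
          have h2 := hIHd (k - 1) (by omega)
          have hz : k - 1 - (k - 1) = 0 := Nat.sub_self _
          rw [hz] at h2
          obtain ⟨t, rfl⟩ : ∃ t, k = t + 1 := ⟨k - 1, by omega⟩
          simp only [Nat.add_sub_cancel] at h2
          have : (-1 : ℤ) ^ (t + 1) * -P.coeff 0 = (-1) ^ t * P.coeff 0 := by ring
          rw [this]
          exact h2

end FinMatroid


/-- All coefficients `μ^k(M)` of the reduced characteristic polynomial
`χ̄_M(λ) = Σ_{k=0}^r (-1)^k μ^k(M) λ^{r-k}` of a loopless matroid of rank `r+1` are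
positive; i.e. the coefficients of `χ̄_M` alternate in sign and are nonzero. -/
theorem mu_pos {E : Type*} [DecidableEq E] [Fintype E]
    (M : FinMatroid E) (r : ℕ) (hM : M.Loopless) (hrk : M.rk Finset.univ = r + 1) :
    ∀ k ≤ r, 0 < (-1 : ℤ) ^ k * M.redCharPoly.coeff (r - k) := by
  intro k hk
  have h := FinMatroid.mu_pos_on (Finset.univ : Finset E).card M Finset.univ r rfl
    (fun e _ => hM e) hrk k hk
  simpa [FinMatroid.redCharPoly, FinMatroid.charPoly_eq] using h
end

section
/- For positive integers k ≤ r, the coefficient μ^k(M) of the reduced characteristic polynomial equals the number of initial descending k-step flags of nonempty proper flats of M, i.e., flags F_1 ⊊ F_2 ⊊ ⋯ ⊊ F_k with rk(F_m) = m for all m and min(F_1) > min(F_2) > ⋯ > min(F_k) > 0. -/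
open Finset

namespace MuAux
open FinMatroid
variable {E : Type*} [DecidableEq E] [Fintype E] (M : FinMatroid E)

def cl (S : Finset E) : Finset E := univ.filter fun x => M.rk (insert x S) = M.rk S

variable {M}

lemma mem_cl {S : Finset E} {x : E} : x ∈ cl M S ↔ M.rk (insert x S) = M.rk S := by
  simp [cl]

lemma subset_cl (S : Finset E) : S ⊆ cl M S := fun x hx => mem_cl.2 (by rw [insert_eq_self.2 hx])

lemma rk_insert_le (S : Finset E) (x : E) : M.rk (insert x S) ≤ M.rk S + 1 := by
  have h := M.rk_submodular {x} S
  have h1 : M.rk {x} ≤ 1 := le_trans (M.rk_le_card _) (by simp)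
  have h2 : ({x} : Finset E) ∪ S = insert x S := by rw [Finset.insert_eq]
  rw [h2] at h
  omega

lemma rk_insert_ge (S : Finset E) (x : E) : M.rk S ≤ M.rk (insert x S) :=
  M.rk_mono (subset_insert _ _)

lemma insert_rk_of_subset {S T : Finset E} {x : E} (hST : S ⊆ T)
    (h : M.rk (insert x S) = M.rk S) : M.rk (insert x T) = M.rk T := by
  have hu : insert x S ∪ T = insert x T := by
    rw [insert_union, union_eq_right.2 hST]
  have hi : S ⊆ insert x S ∩ T := subset_inter (subset_insert _ _) hST
  have := M.rk_submodular (insert x S) T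
  rw [hu, h] at this
  have h2 : M.rk S ≤ M.rk (insert x S ∩ T) := M.rk_mono hi
  have h3 := rk_insert_ge (M := M) T x
  omega

lemma cl_mono {S T : Finset E} (h : S ⊆ T) : cl M S ⊆ cl M T := fun x hx =>
  mem_cl.2 (insert_rk_of_subset h (mem_cl.1 hx))

lemma rk_union_eq {S T : Finset E} (h : ∀ x ∈ T, x ∈ cl M S) : M.rk (S ∪ T) = M.rk S := by
  classical
  induction T using Finset.induction with
  | empty => simp
  | @insert a T ha ih =>
    have h1 : M.rk (S ∪ T) = M.rk S := ih (fun x hx => h x (mem_insert_of_mem hx))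
    have h2 : M.rk (insert a S) = M.rk S := mem_cl.1 (h a (mem_insert_self _ _))
    have h3 : M.rk (insert a (S ∪ T)) = M.rk (S ∪ T) :=
      insert_rk_of_subset subset_union_left h2
    rw [union_insert, h3, h1]

lemma rk_cl (S : Finset E) : M.rk (cl M S) = M.rk S := by
  have : S ∪ cl M S = cl M S := union_eq_right.2 (subset_cl S)
  rw [← this]
  exact rk_union_eq (fun x hx => hx)

lemma rk_insert_of_not_mem_cl {S : Finset E} {x : E} (h : x ∉ cl M S) :
    M.rk (insert x S) = M.rk S + 1 := by
  have h1 := rk_insert_le (M := M) S x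
  have h2 := rk_insert_ge (M := M) S x
  have h3 : M.rk (insert x S) ≠ M.rk S := fun hc => h (mem_cl.2 hc)
  omega

lemma isFlat_cl (S : Finset E) : M.IsFlat (cl M S) := by
  intro e he
  have h1 : M.rk (insert e S) = M.rk S + 1 := by
    by_contra hc
    have : M.rk (insert e S) = M.rk S := by
      have := rk_insert_le (M := M) S e
      have := rk_insert_ge (M := M) S e
      omega
    exact he (mem_cl.2 this)
  have h2 : insert e S ⊆ insert e (cl M S) := insert_subset_insert _ (subset_cl S)
  have h3 : M.rk (insert e S) ≤ M.rk (insert e (cl M S)) := M.rk_mono h2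
  rw [rk_cl]
  omega

lemma cl_subset_flat {S F : Finset E} (hF : M.IsFlat F) (h : S ⊆ F) : cl M S ⊆ F := by
  intro x hx
  by_contra hc
  have h1 : M.rk (insert x S) = M.rk S := mem_cl.1 hx
  have h2 : M.rk (insert x F) = M.rk F := insert_rk_of_subset h h1
  have := hF x hc
  omega

lemma cl_insert_of_mem {S : Finset E} {x : E} (h : x ∈ cl M S) :
    cl M (insert x S) = cl M S := by
  apply Subset.antisymm
  · exact cl_subset_flat (isFlat_cl S) (insert_subset h (subset_cl S))
  · exact cl_mono (subset_insert _ _)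

lemma eq_cl_of_flat {G F : Finset E} (hF : M.IsFlat F) (hGF : G ⊆ F)
    (hrk : M.rk G = M.rk F) : cl M G = F := by
  apply Subset.antisymm (cl_subset_flat hF hGF)
  intro x hx
  by_contra hc
  have h1 : M.rk (insert x G) = M.rk G + 1 := rk_insert_of_not_mem_cl hc
  have h2 : insert x G ⊆ F := insert_subset hx hGF
  have := M.rk_mono h2
  omega

end MuAux
namespace MuAux
open FinMatroid Polynomial

variable {n : ℕ}

/-- `x` is "bad" for `S` if it lies in the closure of the elements of `S` larger than it. -/
def Bad (M : FinMatroid (Fin (n+1))) (S : Finset (Fin (n+1))) (x : Fin (n+1)) : Prop :=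
  x ∈ cl M (S.filter fun y => x < y)

/-- No-broken-circuit condition. -/
def NBC (M : FinMatroid (Fin (n+1))) (S : Finset (Fin (n+1))) : Prop :=
  ∀ x, ¬ Bad M S x

instance (M : FinMatroid (Fin (n+1))) (S : Finset (Fin (n+1))) (x : Fin (n+1)) :
    Decidable (Bad M S x) := by unfold Bad; infer_instance

instance (M : FinMatroid (Fin (n+1))) (S : Finset (Fin (n+1))) :
    Decidable (NBC M S) := by unfold NBC; infer_instance

variable {M : FinMatroid (Fin (n+1))}

lemma nbc_subset {S T : Finset (Fin (n+1))} (hTS : T ⊆ S) (h : NBC M S) : NBC M T := by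
  intro x hx
  exact h x (cl_mono (filter_subset_filter _ hTS) hx)

lemma filter_gt_insert_zero (S : Finset (Fin (n+1))) (x : Fin (n+1)) :
    (insert 0 S).filter (fun y => x < y) = S.filter (fun y => x < y) := by
  ext y
  simp only [mem_filter, mem_insert]
  constructor
  · rintro ⟨rfl | hy, hxy⟩
    · exact absurd hxy (by simp)
    · exact ⟨hy, hxy⟩
  · exact fun ⟨hy, hxy⟩ => ⟨Or.inr hy, hxy⟩

lemma nbc_insert_zero_iff {S : Finset (Fin (n+1))} :
    NBC M (insert 0 S) ↔ NBC M S := by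
  unfold NBC Bad
  simp only [filter_gt_insert_zero]

lemma nbc_rk : ∀ S : Finset (Fin (n+1)), NBC M S → M.rk S = S.card := by
  intro S
  induction S using Finset.strongInduction with
  | H S ih =>
    intro hS
    rcases S.eq_empty_or_nonempty with rfl | hne
    · simp [M.rk_empty]
    · set x := S.min' hne with hxdef
      have hx : x ∈ S := S.min'_mem hne
      have herase : S.erase x = S.filter (fun y => x < y) := by
        ext y
        simp only [mem_erase, mem_filter]
        constructor
        · rintro ⟨hyx, hy⟩
          exact ⟨hy, lt_of_le_of_ne (S.min'_le y hy) (Ne.symm hyx)⟩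
        · rintro ⟨hy, hxy⟩
          exact ⟨ne_of_gt hxy, hy⟩
      have hsub : S.erase x ⊂ S := erase_ssubset hx
      have hnbc : NBC M (S.erase x) := nbc_subset (erase_subset _ _) hS
      have hrke : M.rk (S.erase x) = (S.erase x).card := ih _ hsub hnbc
      have hbad : x ∉ cl M (S.filter fun y => x < y) := hS x
      rw [← herase] at hbad
      have h1 : M.rk (insert x (S.erase x)) = M.rk (S.erase x) + 1 :=
        rk_insert_of_not_mem_cl hbad
      rw [insert_erase hx] at h1
      have hcard : (S.erase x).card = S.card - 1 := card_erase_of_mem hx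
      have hpos : 0 < S.card := card_pos.2 hne
      omega

lemma nbc_card_le {r : ℕ} (hrk : M.rk Finset.univ = r + 1) {S : Finset (Fin (n+1))}
    (h : NBC M S) (h0 : 0 ∉ S) : S.card ≤ r := by
  have h1 : NBC M (insert 0 S) := nbc_insert_zero_iff.2 h
  have h2 : M.rk (insert 0 S) = S.card + 1 := by
    rw [nbc_rk _ h1, card_insert_of_notMem h0]
  have h3 : M.rk (insert 0 S) ≤ M.rk Finset.univ := M.rk_mono (subset_univ _)
  omega

end MuAux
namespace MuAux
open FinMatroid Polynomial

variable {n : ℕ} {M : FinMatroid (Fin (n+1))}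

/-- The minimal bad element of a non-NBC set (junk value `0` otherwise). -/
def minBad (M : FinMatroid (Fin (n+1))) (S : Finset (Fin (n+1))) : Fin (n+1) :=
  if h : (univ.filter (Bad M S)).Nonempty then (univ.filter (Bad M S)).min' h else 0

def flip (M : FinMatroid (Fin (n+1))) (S : Finset (Fin (n+1))) : Finset (Fin (n+1)) :=
  if minBad M S ∈ S then S.erase (minBad M S) else insert (minBad M S) S

lemma badset_nonempty (h : ¬ NBC M S) : (univ.filter (Bad M S)).Nonempty := by
  unfold NBC at h
  push_neg at h
  obtain ⟨x, hx⟩ := h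
  exact ⟨x, mem_filter.2 ⟨mem_univ _, hx⟩⟩

lemma bad_minBad (h : ¬ NBC M S) : Bad M S (minBad M S) := by
  rw [minBad, dif_pos (badset_nonempty h)]
  exact (mem_filter.1 ((univ.filter (Bad M S)).min'_mem _)).2

lemma minBad_le (h : ¬ NBC M S) {y : Fin (n+1)} (hy : Bad M S y) : minBad M S ≤ y := by
  rw [minBad, dif_pos (badset_nonempty h)]
  exact min'_le _ _ (mem_filter.2 ⟨mem_univ _, hy⟩)

lemma not_bad_of_lt_minBad (h : ¬ NBC M S) {y : Fin (n+1)} (hy : y < minBad M S) :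
    ¬ Bad M S y := fun hb => absurd (minBad_le h hb) (not_le.2 hy)

lemma filter_gt_flip_of_ge {z : Fin (n+1)} (hz : minBad M S ≤ z) :
    (flip M S).filter (fun y => z < y) = S.filter (fun y => z < y) := by
  rw [flip]
  split_ifs with hmem
  · ext y
    simp only [mem_filter, mem_erase]
    constructor
    · rintro ⟨⟨hne, hy⟩, hzy⟩; exact ⟨hy, hzy⟩
    · rintro ⟨hy, hzy⟩
      exact ⟨⟨fun hc => absurd (hc ▸ hzy) (not_lt.2 hz), hy⟩, hzy⟩
  · ext y
    simp only [mem_filter, mem_insert]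
    constructor
    · rintro ⟨rfl | hy, hzy⟩
      · exact absurd hzy (not_lt.2 hz)
      · exact ⟨hy, hzy⟩
    · rintro ⟨hy, hzy⟩; exact ⟨Or.inr hy, hzy⟩

lemma bad_flip_minBad (h : ¬ NBC M S) : Bad M (flip M S) (minBad M S) := by
  rw [Bad, filter_gt_flip_of_ge le_rfl]
  exact bad_minBad h

lemma not_nbc_flip (h : ¬ NBC M S) : ¬ NBC M (flip M S) := fun hc => hc _ (bad_flip_minBad h)

lemma not_bad_flip_of_lt (h : ¬ NBC M S) {y : Fin (n+1)} (hy : y < minBad M S) :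
    ¬ Bad M (flip M S) y := by
  have hbadS : ¬ Bad M S y := not_bad_of_lt_minBad h hy
  rw [flip]
  split_ifs with hmem
  · intro hb
    exact hbadS (cl_mono (filter_subset_filter _ (erase_subset _ _)) hb)
  · have hfe : (insert (minBad M S) S).filter (fun t => y < t)
        = insert (minBad M S) (S.filter (fun t => y < t)) := by
      rw [filter_insert, if_pos hy]
    have hsub : S.filter (fun t => minBad M S < t) ⊆ S.filter (fun t => y < t) := by
      intro a ha
      rw [mem_filter] at ha ⊢
      exact ⟨ha.1, lt_trans hy ha.2⟩
    have hmm : minBad M S ∈ cl M (S.filter (fun t => y < t)) := cl_mono hsub (bad_minBad h)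
    intro hb
    rw [Bad, hfe, cl_insert_of_mem hmm] at hb
    exact hbadS hb

lemma minBad_flip (h : ¬ NBC M S) : minBad M (flip M S) = minBad M S := by
  have h' := not_nbc_flip h
  rcases lt_or_ge (minBad M (flip M S)) (minBad M S) with hlt | hge
  · exact absurd (bad_minBad h') (not_bad_flip_of_lt h hlt)
  · exact le_antisymm (minBad_le h' (bad_flip_minBad h)) hge

lemma flip_flip (h : ¬ NBC M S) : flip M (flip M S) = S := by
  have hf := minBad_flip h
  set T := flip M S with hT
  rw [flip, hf]
  by_cases hmem : minBad M S ∈ S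
  · have hTval : T = S.erase (minBad M S) := by rw [hT, flip, if_pos hmem]
    rw [hTval, if_neg (notMem_erase _ _), insert_erase hmem]
  · have hTval : T = insert (minBad M S) S := by rw [hT, flip, if_neg hmem]
    rw [hTval, if_pos (mem_insert_self _ _), erase_insert hmem]

lemma rk_flip (h : ¬ NBC M S) : M.rk (flip M S) = M.rk S := by
  have hx := bad_minBad h
  rw [Bad] at hx
  rw [flip]
  split_ifs with hmem
  · have hsub : S.filter (fun y => minBad M S < y) ⊆ S.erase (minBad M S) := by
      intro a ha
      rw [mem_filter] at ha
      exact mem_erase.2 ⟨ne_of_gt ha.2, ha.1⟩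
    have : M.rk (insert (minBad M S) (S.erase (minBad M S))) = M.rk (S.erase (minBad M S)) :=
      mem_cl.1 (cl_mono hsub hx)
    rw [insert_erase hmem] at this
    exact this.symm
  · exact mem_cl.1 (cl_mono (filter_subset _ _) hx)

lemma pow_card_flip : ((-1:ℤ))^(flip M S).card = -((-1:ℤ))^S.card := by
  rw [flip]
  split_ifs with hmem
  · have hc : S.card = (S.card - 1) + 1 := by
      have := card_pos.2 ⟨_, hmem⟩
      omega
    rw [card_erase_of_mem hmem]
    conv_rhs => rw [hc]
    rw [pow_succ]
    ring
  · rw [card_insert_of_notMem hmem, pow_succ]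
    ring

lemma flip_ne (h : ¬ NBC M S) : flip M S ≠ S := by
  intro hc
  have h1 : ((-1:ℤ))^(flip M S).card = ((-1:ℤ))^S.card := by rw [hc]
  have h2 := pow_card_flip (M := M) (S := S)
  have h3 : ((-1:ℤ))^S.card ≠ 0 := pow_ne_zero _ (by norm_num)
  rw [h2] at h1
  exact h3 (by linarith)

lemma sum_not_nbc_eq_zero (r : ℕ) :
    ∑ S ∈ univ.powerset.filter (fun S : Finset (Fin (n+1)) => ¬ NBC M S),
      (C ((-1:ℤ)^S.card) * X ^ (r + 1 - M.rk S)) = 0 := by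
  apply Finset.sum_involution (g := fun S _ => flip M S)
  · intro S hS
    have h : ¬ NBC M S := (mem_filter.1 hS).2
    rw [rk_flip h, pow_card_flip, map_neg]
    ring
  · intro S hS _
    exact flip_ne (mem_filter.1 hS).2
  · intro S hS
    exact mem_filter.2 ⟨mem_powerset.2 (subset_univ _), not_nbc_flip (mem_filter.1 hS).2⟩
  · intro S hS
    exact flip_flip (mem_filter.1 hS).2

end MuAux


namespace MuAux
open FinMatroid Polynomial

variable {n : ℕ} {M : FinMatroid (Fin (n+1))}

/-- The set of NBC sets avoiding `0`. -/
def nbcZero (M : FinMatroid (Fin (n+1))) : Finset (Finset (Fin (n+1))) :=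
  univ.powerset.filter (fun S => NBC M S ∧ 0 ∉ S)

noncomputable def Q (M : FinMatroid (Fin (n+1))) (r : ℕ) : Polynomial ℤ :=
  ∑ S ∈ nbcZero M, C ((-1:ℤ)^S.card) * X ^ (r - S.card)

lemma rk_insert_zero {S : Finset (Fin (n+1))} (hS : NBC M S) (h0 : 0 ∉ S) :
    M.rk (insert 0 S) = M.rk S + 1 := by
  have h1 : NBC M (insert 0 S) := nbc_insert_zero_iff.2 hS
  rw [nbc_rk _ h1, nbc_rk _ hS, card_insert_of_notMem h0]

lemma charPoly_eq {r : ℕ} (hrk : M.rk Finset.univ = r + 1) :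
    M.charPoly = (X - 1) * Q M r := by
  have hsplit := Finset.sum_filter_add_sum_filter_not
    (univ.powerset : Finset (Finset (Fin (n+1)))) (fun S => NBC M S)
    (fun S => C ((-1:ℤ)^S.card) * X ^ (r + 1 - M.rk S))
  have hzero : ∑ S ∈ univ.powerset.filter (fun S : Finset (Fin (n+1)) => ¬ NBC M S),
      (C ((-1:ℤ)^S.card) * X ^ (r + 1 - M.rk S)) = 0 := sum_not_nbc_eq_zero r
  have hchar : M.charPoly = ∑ S ∈ univ.powerset.filter (fun S : Finset (Fin (n+1)) => NBC M S),
      (C ((-1:ℤ)^S.card) * X ^ (r + 1 - M.rk S)) := by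
    rw [charPoly]
    simp_rw [hrk]
    rw [← hsplit, hzero, add_zero]
  -- now split the NBC sum by whether 0 ∈ S
  have hsplit2 := Finset.sum_filter_add_sum_filter_not
    (univ.powerset.filter (fun S : Finset (Fin (n+1)) => NBC M S)) (fun S => 0 ∉ S)
    (fun S => C ((-1:ℤ)^S.card) * X ^ (r + 1 - M.rk S))
  have hA : (univ.powerset.filter (fun S : Finset (Fin (n+1)) => NBC M S)).filter
      (fun S => 0 ∉ S) = nbcZero M := by
    rw [nbcZero, filter_filter]
  -- the sum over sets containing 0 equals sum over nbcZero of f (insert 0 S)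
  have hB : ∑ S ∈ (univ.powerset.filter (fun S : Finset (Fin (n+1)) => NBC M S)).filter
      (fun S => ¬ (0 ∉ S)),
      (C ((-1:ℤ)^S.card) * X ^ (r + 1 - M.rk S)) =
    ∑ S ∈ nbcZero M, (C ((-1:ℤ)^(insert 0 S).card) * X ^ (r + 1 - M.rk (insert 0 S))) := by
    refine Finset.sum_bij' (fun S _ => S.erase 0) (fun S _ => insert 0 S) ?_ ?_ ?_ ?_ ?_
    · intro S hS
      simp only [mem_filter, mem_powerset, not_not] at hS
      obtain ⟨⟨hsub, hnbc⟩, h0⟩ := hS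
      refine mem_filter.2 ⟨mem_powerset.2 (subset_univ _), ?_, notMem_erase _ _⟩
      exact nbc_subset (erase_subset _ _) hnbc
    · intro S hS
      simp only [nbcZero, mem_filter, mem_powerset] at hS
      obtain ⟨hsub, hnbc, h0⟩ := hS
      refine mem_filter.2 ⟨mem_filter.2 ⟨mem_powerset.2 (subset_univ _), ?_⟩, not_not.2 (mem_insert_self _ _)⟩
      exact nbc_insert_zero_iff.2 hnbc
    · intro S hS
      simp only [mem_filter, mem_powerset, not_not] at hS
      exact insert_erase hS.2
    · intro S hS
      simp only [nbcZero, mem_filter, mem_powerset] at hS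
      exact erase_insert hS.2.2
    · intro S hS
      simp only [mem_filter, mem_powerset, not_not] at hS
      rw [insert_erase hS.2]
  have hcomb : M.charPoly = ∑ S ∈ nbcZero M,
      ((C ((-1:ℤ)^S.card) * X ^ (r + 1 - M.rk S))
        + (C ((-1:ℤ)^(insert 0 S).card) * X ^ (r + 1 - M.rk (insert 0 S)))) := by
    rw [hchar, ← hsplit2, hA, hB, Finset.sum_add_distrib]
  rw [hcomb, Q, Finset.mul_sum]
  apply Finset.sum_congr rfl
  intro S hS
  simp only [nbcZero, mem_filter, mem_powerset] at hS
  obtain ⟨hsub, hnbc, h0⟩ := hS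
  have hc : M.rk S = S.card := nbc_rk _ hnbc
  have hcle : S.card ≤ r := nbc_card_le hrk hnbc h0
  have h1 : M.rk (insert 0 S) = S.card + 1 := by rw [rk_insert_zero hnbc h0, hc]
  have h2 : (insert 0 S).card = S.card + 1 := card_insert_of_notMem h0
  rw [hc, h1, h2]
  have e1 : r + 1 - S.card = (r - S.card) + 1 := by omega
  have e2 : r + 1 - (S.card + 1) = r - S.card := by omega
  rw [e1, e2, pow_succ _ S.card, pow_succ X (r - S.card), map_mul]
  simp only [map_neg, map_one]
  ring

lemma redCharPoly_eq {r : ℕ} (hrk : M.rk Finset.univ = r + 1) :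
    M.redCharPoly = Q M r := by
  rw [redCharPoly, charPoly_eq hrk]
  have hm : (X - 1 : Polynomial ℤ).Monic := by
    have := Polynomial.monic_X_sub_C (1 : ℤ)
    simpa using this
  exact Polynomial.mul_divByMonic_cancel_left _ hm

lemma coeff_redCharPoly {r k : ℕ} (hrk : M.rk Finset.univ = r + 1) (hkr : k ≤ r) :
    (-1 : ℤ)^k * M.redCharPoly.coeff (r - k) =
      ((nbcZero M).filter (fun S => S.card = k)).card := by
  rw [redCharPoly_eq hrk, Q, Polynomial.finset_sum_coeff]
  have hterm : ∀ S ∈ nbcZero M,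
      (C ((-1:ℤ)^S.card) * X ^ (r - S.card)).coeff (r - k)
        = if S.card = k then (-1:ℤ)^k else 0 := by
    intro S hS
    simp only [nbcZero, mem_filter, mem_powerset] at hS
    have hcle : S.card ≤ r := nbc_card_le hrk hS.2.1 hS.2.2
    rw [Polynomial.coeff_C_mul, Polynomial.coeff_X_pow]
    by_cases hcard : S.card = k
    · rw [if_pos (by omega), if_pos hcard, hcard, mul_one]
    · rw [if_neg (by omega), if_neg hcard, mul_zero]
  rw [Finset.sum_congr rfl hterm, ← Finset.sum_filter, Finset.sum_const, nsmul_eq_mul]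
  have h1 : ((-1:ℤ))^k * ((-1:ℤ))^k = 1 := by
    rw [← pow_add]
    exact Even.neg_one_pow ⟨k, by ring⟩
  set c := (((nbcZero M).filter (fun S => S.card = k)).card : ℤ)
  calc (-1:ℤ)^k * (c * (-1)^k) = c * ((-1:ℤ)^k * (-1)^k) := by ring
    _ = c := by rw [h1, mul_one]

end MuAux
namespace MuAux
open FinMatroid Polynomial

variable {n k : ℕ} {M : FinMatroid (Fin (n+1))}

lemma fin_pos_of_ne_zero {x : Fin (n+1)} (h : x ≠ 0) : 0 < x :=
  lt_of_le_of_ne (Fin.zero_le x) (Ne.symm h)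

section StrictAntiEnum

variable {e : Fin k → Fin (n+1)}

lemma filter_ge_image (he : StrictAnti e) (m : Fin k) :
    (image e univ).filter (fun y => e m ≤ y) = image e (univ.filter (· ≤ m)) := by
  ext y
  simp only [mem_filter, mem_image, mem_univ, true_and]
  constructor
  · rintro ⟨⟨j, rfl⟩, hle⟩
    exact ⟨j, by rwa [← he.le_iff_ge], rfl⟩
  · rintro ⟨j, hj, rfl⟩
    exact ⟨⟨j, rfl⟩, he.antitone hj⟩

lemma card_filter_le_fin (m : Fin k) :
    ((univ : Finset (Fin k)).filter (· ≤ m)).card = (m : ℕ) + 1 := by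
  have : (univ : Finset (Fin k)).filter (· ≤ m) = Finset.Iic m := by
    ext j; simp
  rw [this, Fin.card_Iic]

lemma card_image_filter_le (he : StrictAnti e) (m : Fin k) :
    (image e (univ.filter (· ≤ m))).card = (m : ℕ) + 1 := by
  rw [card_image_of_injective _ he.injective, card_filter_le_fin]

end StrictAntiEnum

/-- The flag associated to a strictly decreasing enumeration. -/
def flagOf (M : FinMatroid (Fin (n+1))) (e : Fin k → Fin (n+1)) (m : Fin k) :
    Finset (Fin (n+1)) :=
  cl M ((image e univ).filter (fun y => e m ≤ y))

section Forward

lemma rk_flagOf {e : Fin k → Fin (n+1)} (he : StrictAnti e)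
    (hnbc : NBC M (image e univ)) (m : Fin k) :
    M.rk (flagOf M e m) = (m : ℕ) + 1 := by
  rw [flagOf, rk_cl, filter_ge_image he]
  rw [nbc_rk _ (nbc_subset ?_ hnbc)]
  · exact card_image_filter_le he m
  · exact image_subset_image (filter_subset _ _)

lemma mem_flagOf_self {e : Fin k → Fin (n+1)} (m : Fin k) : e m ∈ flagOf M e m :=
  subset_cl _ (mem_filter.2 ⟨mem_image_of_mem _ (mem_univ _), le_rfl⟩)

lemma flagOf_nonempty {e : Fin k → Fin (n+1)} (m : Fin k) : (flagOf M e m).Nonempty :=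
  ⟨e m, mem_flagOf_self m⟩

lemma le_of_mem_flagOf {e : Fin k → Fin (n+1)} (hnbc : NBC M (image e univ))
    {m : Fin k} {x : Fin (n+1)} (hx : x ∈ flagOf M e m) : e m ≤ x := by
  by_contra hc
  push_neg at hc
  apply hnbc x
  rw [Bad]
  apply cl_mono ?_ hx
  intro y hy
  rw [mem_filter] at hy ⊢
  exact ⟨hy.1, lt_of_lt_of_le hc hy.2⟩

lemma min'_flagOf {e : Fin k → Fin (n+1)} (hnbc : NBC M (image e univ)) (m : Fin k) :
    (flagOf M e m).min' (flagOf_nonempty m) = e m :=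
  le_antisymm (min'_le _ _ (mem_flagOf_self m))
    (le_min' _ _ _ (fun x hx => le_of_mem_flagOf hnbc hx))

lemma flagOf_isFlat {e : Fin k → Fin (n+1)} (m : Fin k) : M.IsFlat (flagOf M e m) :=
  isFlat_cl _

lemma flagOf_ssubset {e : Fin k → Fin (n+1)} (he : StrictAnti e)
    (hnbc : NBC M (image e univ)) {m m' : Fin k} (hmm : m < m') :
    flagOf M e m ⊂ flagOf M e m' := by
  have hsub : flagOf M e m ⊆ flagOf M e m' := by
    apply cl_mono
    intro y hy
    rw [mem_filter] at hy ⊢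
    exact ⟨hy.1, le_trans (le_of_lt (he hmm)) hy.2⟩
  refine ssubset_of_subset_of_ne hsub (fun hc => ?_)
  have h1 := rk_flagOf he hnbc m
  have h2 := rk_flagOf he hnbc m'
  rw [hc] at h1
  have : (m : ℕ) < (m' : ℕ) := hmm
  omega

lemma flagOf_ne_univ {r : ℕ} (hrk : M.rk Finset.univ = r + 1) {e : Fin k → Fin (n+1)}
    (he : StrictAnti e) (hnbc : NBC M (image e univ)) (hkr : k ≤ r) (m : Fin k) :
    flagOf M e m ≠ Finset.univ := by
  intro hc
  have h1 := rk_flagOf he hnbc m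
  rw [hc, hrk] at h1
  have : (m : ℕ) < k := m.2
  omega

end Forward

end MuAux
namespace MuAux
open FinMatroid Polynomial

variable {n k : ℕ} {M : FinMatroid (Fin (n+1))}

section Backward

variable {𝓕 : Fin k → Finset (Fin (n+1))} {e : Fin k → Fin (n+1)}

lemma chain_le (hchain : ∀ m m' : Fin k, m < m' → 𝓕 m ⊆ 𝓕 m')
    {m m' : Fin k} (h : m ≤ m') : 𝓕 m ⊆ 𝓕 m' := by
  rcases lt_or_eq_of_le h with hlt | rfl
  · exact hchain _ _ hlt
  · exact Subset.rfl

lemma not_mem_of_lt (he : StrictAnti e) (hmin : ∀ m x, x ∈ 𝓕 m → e m ≤ x)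
    {m m' : Fin k} (h : m < m') : e m' ∉ 𝓕 m := by
  intro hc
  exact absurd (hmin m _ hc) (not_le.2 (he h))

lemma image_le_subset (hmem : ∀ m, e m ∈ 𝓕 m)
    (hchain : ∀ m m' : Fin k, m < m' → 𝓕 m ⊆ 𝓕 m') (m : Fin k) :
    image e (univ.filter (· ≤ m)) ⊆ 𝓕 m := by
  intro y hy
  rw [mem_image] at hy
  obtain ⟨j, hj, rfl⟩ := hy
  rw [mem_filter] at hj
  exact chain_le hchain hj.2 (hmem j)

lemma rk_image_le (hM : M.Loopless) (he : StrictAnti e)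
    (hmem : ∀ m, e m ∈ 𝓕 m) (hmin : ∀ m x, x ∈ 𝓕 m → e m ≤ x)
    (hflat : ∀ m, M.IsFlat (𝓕 m))
    (hchain : ∀ m m' : Fin k, m < m' → 𝓕 m ⊆ 𝓕 m') :
    ∀ (v : ℕ) (hv : v < k), M.rk (image e (univ.filter (· ≤ ⟨v, hv⟩))) = v + 1 := by
  intro v
  induction v with
  | zero =>
    intro hv
    have hfz : (univ : Finset (Fin k)).filter (· ≤ ⟨0, hv⟩) = {⟨0, hv⟩} := by
      ext j
      simp only [mem_filter, mem_univ, true_and, mem_singleton]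
      constructor
      · intro hj
        exact le_antisymm hj (by exact Fin.mk_le_of_le_val (Nat.zero_le _))
      · rintro rfl; exact le_rfl
    rw [hfz, image_singleton]
    exact hM _
  | succ v ih =>
    intro hv
    have hv' : v < k := by omega
    have hstep : (univ : Finset (Fin k)).filter (· ≤ ⟨v+1, hv⟩)
        = insert ⟨v+1, hv⟩ ((univ : Finset (Fin k)).filter (· ≤ ⟨v, hv'⟩)) := by
      ext j
      simp only [mem_filter, mem_univ, true_and, mem_insert]
      rw [Fin.le_def, Fin.le_def, Fin.ext_iff]
      show j.val ≤ v+1 ↔ j.val = v+1 ∨ j.val ≤ v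
      omega
    rw [hstep, image_insert]
    have hnotcl : e ⟨v+1, hv⟩ ∉ cl M (image e (univ.filter (· ≤ ⟨v, hv'⟩))) := by
      intro hc
      have hsub : cl M (image e (univ.filter (· ≤ ⟨v, hv'⟩))) ⊆ 𝓕 ⟨v, hv'⟩ :=
        cl_subset_flat (hflat _) (image_le_subset hmem hchain _)
      exact not_mem_of_lt he hmin (Fin.mk_lt_mk.2 (Nat.lt_succ_self v)) (hsub hc)
    rw [rk_insert_of_not_mem_cl hnotcl, ih hv']

lemma cl_image_le (hM : M.Loopless) (he : StrictAnti e)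
    (hmem : ∀ m, e m ∈ 𝓕 m) (hmin : ∀ m x, x ∈ 𝓕 m → e m ≤ x)
    (hflat : ∀ m, M.IsFlat (𝓕 m))
    (hrkF : ∀ m : Fin k, M.rk (𝓕 m) = (m : ℕ) + 1)
    (hchain : ∀ m m' : Fin k, m < m' → 𝓕 m ⊆ 𝓕 m') (m : Fin k) :
    cl M (image e (univ.filter (· ≤ m))) = 𝓕 m := by
  apply eq_cl_of_flat (hflat m) (image_le_subset hmem hchain m)
  rw [hrkF m]
  have := rk_image_le hM he hmem hmin hflat hchain m.1 m.2
  simpa using this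

lemma nbc_of_flag (hM : M.Loopless) (he : StrictAnti e)
    (hmem : ∀ m, e m ∈ 𝓕 m) (hmin : ∀ m x, x ∈ 𝓕 m → e m ≤ x)
    (hflat : ∀ m, M.IsFlat (𝓕 m))
    (hchain : ∀ m m' : Fin k, m < m' → 𝓕 m ⊆ 𝓕 m') :
    NBC M (image e univ) := by
  intro x hx
  rw [Bad] at hx
  have himg : (image e univ).filter (fun y => x < y)
      = image e (univ.filter (fun j => x < e j)) := by
    ext y
    simp only [mem_filter, mem_image, mem_univ, true_and]
    constructor
    · rintro ⟨⟨j, rfl⟩, hxy⟩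
      exact ⟨j, hxy, rfl⟩
    · rintro ⟨j, hj, rfl⟩
      exact ⟨⟨j, rfl⟩, hj⟩
  rw [himg] at hx
  rcases Finset.eq_empty_or_nonempty ((univ : Finset (Fin k)).filter (fun j => x < e j))
    with hJ | hJ
  · rw [hJ, image_empty] at hx
    have h1 : M.rk {x} = M.rk (∅ : Finset (Fin (n+1))) := by
      have := mem_cl.1 hx
      simpa using this
    rw [hM x, M.rk_empty] at h1
    omega
  · set jm := (((univ : Finset (Fin k)).filter (fun j => x < e j))).max' hJ with hjm
    have hjmJ : x < e jm := by
      have := (((univ : Finset (Fin k)).filter (fun j => x < e j))).max'_mem hJ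
      rw [← hjm] at this
      exact (mem_filter.1 this).2
    have hsub : image e (univ.filter (fun j => x < e j)) ⊆ 𝓕 jm := by
      intro y hy
      rw [mem_image] at hy
      obtain ⟨j, hj, rfl⟩ := hy
      have hjle : j ≤ jm := le_max' _ _ hj
      exact chain_le hchain hjle (hmem j)
    have hxmem : x ∈ 𝓕 jm := cl_subset_flat (hflat _) hsub hx
    exact absurd (hmin _ _ hxmem) (not_le.2 hjmJ)

end Backward

end MuAux
namespace MuAux
open FinMatroid Polynomial

variable {n k : ℕ} {M : FinMatroid (Fin (n+1))}

/-- Decreasing enumeration of a `k`-element set (junk if the cardinality is wrong). -/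
def enum (k : ℕ) (S : Finset (Fin (n+1))) : Fin k → Fin (n+1) :=
  fun m => if h : S.card = k then S.orderEmbOfFin h m.rev else 0

lemma enum_strictAnti {S : Finset (Fin (n+1))} (h : S.card = k) :
    StrictAnti (enum k S) := by
  intro a b hab
  rw [enum, enum, dif_pos h, dif_pos h]
  exact (S.orderEmbOfFin h).strictMono (Fin.rev_lt_rev.mpr hab)

lemma enum_mem {S : Finset (Fin (n+1))} (h : S.card = k) (m : Fin k) :
    enum k S m ∈ S := by
  rw [enum, dif_pos h]
  exact S.orderEmbOfFin_mem h _

lemma image_enum {S : Finset (Fin (n+1))} (h : S.card = k) :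
    image (enum k S) univ = S := by
  ext y
  simp only [mem_image, mem_univ, true_and]
  constructor
  · rintro ⟨m, rfl⟩
    exact enum_mem h m
  · intro hy
    have : y ∈ Set.range (S.orderEmbOfFin h) := by
      rw [Finset.range_orderEmbOfFin]
      exact hy
    obtain ⟨i, hi⟩ := this
    refine ⟨i.rev, ?_⟩
    rw [enum, dif_pos h, Fin.rev_rev, hi]

lemma enum_unique {e : Fin k → Fin (n+1)} (he : StrictAnti e)
    (hcard : (image e univ).card = k) : enum k (image e univ) = e := by
  have hmono : StrictMono (fun i : Fin k => e i.rev) := by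
    intro a b hab
    exact he (Fin.rev_lt_rev.mpr hab)
  have hf : (fun i : Fin k => e i.rev) = (image e univ).orderEmbOfFin hcard :=
    Finset.orderEmbOfFin_unique hcard (fun i => mem_image_of_mem _ (mem_univ _)) hmono
  funext m
  rw [enum, dif_pos hcard, ← congrFun hf m.rev, Fin.rev_rev]

variable (M k) in
/-- The flag subtype appearing in the main statement. -/
noncomputable def muEquiv (hM : M.Loopless) {r : ℕ} (hrk : M.rk Finset.univ = r + 1)
    (hk : 1 ≤ k) (hkr : k ≤ r) :
    {S : Finset (Fin (n+1)) // S ∈ (nbcZero M).filter (fun S => S.card = k)} ≃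
    {𝓕 : Fin k → Finset (Fin (n + 1)) //
      (∀ m, M.IsFlat (𝓕 m)) ∧
      (∀ m, (𝓕 m).Nonempty) ∧
      (∀ m, 𝓕 m ≠ Finset.univ) ∧
      (∀ m : Fin k, M.rk (𝓕 m) = (m : ℕ) + 1) ∧
      (∀ m m' : Fin k, m < m' → 𝓕 m ⊂ 𝓕 m') ∧
      (∀ m m' : Fin k, m < m' → ∀ (h : (𝓕 m).Nonempty) (h' : (𝓕 m').Nonempty),
        (𝓕 m').min' h' < (𝓕 m).min' h) ∧
      (∀ h : (𝓕 ⟨k - 1, by omega⟩).Nonempty,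
        (0 : Fin (n + 1)) < (𝓕 ⟨k - 1, by omega⟩).min' h)} where
  toFun := fun ⟨S, hS⟩ => ⟨flagOf M (enum k S), by
    have hS' := hS
    simp only [nbcZero, mem_filter, mem_powerset] at hS'
    obtain ⟨⟨-, hnbc, h0⟩, hcard⟩ := hS'
    have he : StrictAnti (enum k S) := enum_strictAnti hcard
    have himg : image (enum k S) univ = S := image_enum hcard
    have hnbc' : NBC M (image (enum k S) univ) := by rwa [himg]
    refine ⟨fun m => flagOf_isFlat m, fun m => flagOf_nonempty m,
      fun m => flagOf_ne_univ hrk he hnbc' hkr m,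
      fun m => rk_flagOf he hnbc' m,
      fun m m' h => flagOf_ssubset he hnbc' h, ?_, ?_⟩
    · intro m m' h hne hne'
      rw [min'_flagOf hnbc' m, min'_flagOf hnbc' m']
      exact he h
    · intro h
      rw [min'_flagOf hnbc' _]
      apply fin_pos_of_ne_zero
      intro hc
      apply h0
      rw [← himg, ← hc]
      exact mem_image_of_mem _ (mem_univ _)⟩
  invFun := fun F => ⟨image (fun m => (F.1 m).min' (F.2.2.1 m)) univ, by
    obtain ⟨𝓕, hflat, hne, hneu, hrkF, hchain, hdec, hlast⟩ := F
    set e : Fin k → Fin (n+1) := fun m => (𝓕 m).min' (hne m) with hedef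
    have he : StrictAnti e := fun m m' h => hdec m m' h (hne m) (hne m')
    have hmem : ∀ m, e m ∈ 𝓕 m := fun m => (𝓕 m).min'_mem (hne m)
    have hmin : ∀ m x, x ∈ 𝓕 m → e m ≤ x := fun m x hx => min'_le _ _ hx
    have hchain' : ∀ m m' : Fin k, m < m' → 𝓕 m ⊆ 𝓕 m' :=
      fun m m' h => (hchain m m' h).subset
    have hnbc : NBC M (image e univ) := nbc_of_flag hM he hmem hmin hflat hchain'
    have hpos : ∀ m, (0 : Fin (n+1)) < e m := by
      intro m
      have hmle : m ≤ (⟨k - 1, by omega⟩ : Fin k) := by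
        rw [Fin.le_def]
        have := m.2
        simp only []
        omega
      calc (0 : Fin (n+1)) < e ⟨k - 1, by omega⟩ := hlast (hne _)
        _ ≤ e m := he.antitone hmle
    have h0 : (0 : Fin (n+1)) ∉ image e univ := by
      intro hc
      rw [mem_image] at hc
      obtain ⟨m, -, hm⟩ := hc
      exact absurd (hm ▸ hpos m) (lt_irrefl _)
    have hcard : (image e univ).card = k := by
      rw [card_image_of_injective _ he.injective, card_univ, Fintype.card_fin]
    simp only [nbcZero, mem_filter, mem_powerset]
    exact ⟨⟨subset_univ _, hnbc, h0⟩, hcard⟩⟩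
  left_inv := by
    rintro ⟨S, hS⟩
    have hS' := hS
    simp only [nbcZero, mem_filter, mem_powerset] at hS'
    obtain ⟨⟨-, hnbc, h0⟩, hcard⟩ := hS'
    have he : StrictAnti (enum k S) := enum_strictAnti hcard
    have himg : image (enum k S) univ = S := image_enum hcard
    have hnbc' : NBC M (image (enum k S) univ) := by rwa [himg]
    apply Subtype.ext
    show image (fun m => (flagOf M (enum k S) m).min' _) univ = S
    have hfun : (fun m => (flagOf M (enum k S) m).min'
        (flagOf_nonempty m)) = enum k S := funext fun m => min'_flagOf hnbc' m
    rw [hfun, himg]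
  right_inv := by
    rintro ⟨𝓕, hflat, hne, hneu, hrkF, hchain, hdec, hlast⟩
    apply Subtype.ext
    set e : Fin k → Fin (n+1) := fun m => (𝓕 m).min' (hne m) with hedef
    have he : StrictAnti e := fun m m' h => hdec m m' h (hne m) (hne m')
    have hmem : ∀ m, e m ∈ 𝓕 m := fun m => (𝓕 m).min'_mem (hne m)
    have hmin : ∀ m x, x ∈ 𝓕 m → e m ≤ x := fun m x hx => min'_le _ _ hx
    have hchain' : ∀ m m' : Fin k, m < m' → 𝓕 m ⊆ 𝓕 m' :=
      fun m m' h => (hchain m m' h).subset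
    have hcard : (image e univ).card = k := by
      rw [card_image_of_injective _ he.injective, card_univ, Fintype.card_fin]
    have henum : enum k (image e univ) = e := enum_unique he hcard
    show flagOf M (enum k (image e univ)) = 𝓕
    rw [henum]
    funext m
    rw [flagOf, filter_ge_image he]
    exact cl_image_le hM he hmem hmin hflat hrkF hchain' m

theorem mu_eq_card_flags (hM : M.Loopless) {r : ℕ} (hrk : M.rk Finset.univ = r + 1)
    (hk : 1 ≤ k) (hkr : k ≤ r) :
    (-1 : ℤ) ^ k * M.redCharPoly.coeff (r - k) =
    Nat.card {𝓕 : Fin k → Finset (Fin (n + 1)) //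
      (∀ m, M.IsFlat (𝓕 m)) ∧
      (∀ m, (𝓕 m).Nonempty) ∧
      (∀ m, 𝓕 m ≠ Finset.univ) ∧
      (∀ m : Fin k, M.rk (𝓕 m) = (m : ℕ) + 1) ∧
      (∀ m m' : Fin k, m < m' → 𝓕 m ⊂ 𝓕 m') ∧
      (∀ m m' : Fin k, m < m' → ∀ (h : (𝓕 m).Nonempty) (h' : (𝓕 m').Nonempty),
        (𝓕 m').min' h' < (𝓕 m).min' h) ∧
      (∀ h : (𝓕 ⟨k - 1, by omega⟩).Nonempty,
        (0 : Fin (n + 1)) < (𝓕 ⟨k - 1, by omega⟩).min' h)} := by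
  rw [coeff_redCharPoly hrk hkr]
  have key := Nat.card_congr (muEquiv k M hM hrk hk hkr)
  rw [Nat.card_eq_finsetCard] at key
  rw [← key]

end MuAux


/-- For `1 ≤ k ≤ r`, the coefficient `μ^k(M)` of the reduced characteristic
polynomial of a loopless matroid `M` of rank `r+1` on `E = {0,…,n}` equals the number of
initial descending `k`-step flags of nonempty proper flats: flags `F_1 ⊊ ⋯ ⊊ F_k` with
`rk(F_m) = m` for all `m` and `min F_1 > min F_2 > ⋯ > min F_k > 0`. -/
theorem mu_eq_card_initial_descending_flags (n r k : ℕ)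
    (M : FinMatroid (Fin (n + 1))) (hM : M.Loopless)
    (hrk : M.rk Finset.univ = r + 1) (hk : 1 ≤ k) (hkr : k ≤ r) :
    (-1 : ℤ) ^ k * M.redCharPoly.coeff (r - k) =
    Nat.card {𝓕 : Fin k → Finset (Fin (n + 1)) //
      (∀ m, M.IsFlat (𝓕 m)) ∧
      (∀ m, (𝓕 m).Nonempty) ∧
      (∀ m, 𝓕 m ≠ Finset.univ) ∧
      (∀ m : Fin k, M.rk (𝓕 m) = (m : ℕ) + 1) ∧
      (∀ m m' : Fin k, m < m' → 𝓕 m ⊂ 𝓕 m') ∧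
      (∀ m m' : Fin k, m < m' → ∀ (h : (𝓕 m).Nonempty) (h' : (𝓕 m').Nonempty),
        (𝓕 m').min' h' < (𝓕 m).min' h) ∧
      (∀ h : (𝓕 ⟨k - 1, by omega⟩).Nonempty,
        (0 : Fin (n + 1)) < (𝓕 ⟨k - 1, by omega⟩).min' h)} := by
  exact MuAux.mu_eq_card_flags hM hrk hk hkr
end

section
/- Let R* be a graded Artinian ℝ-algebra satisfying Poincaré duality of dimension r with degree isomorphism deg: R^r → ℝ, and let x be a nonzero element of R^d. Then the quotient R*/ann(x), where ann(x) = {a : x·a = 0}, is a Poincaré duality algebra of dimension r−d with degree map a + ann(x) ↦ deg(x·a). -/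
open Module

section PDAlgebra

variable {A : Type*} [CommRing A] [Algebra ℝ A]

/-- A graded algebra `R*` (with grading `R : ℕ → Submodule ℝ A` of the finite-dimensional
ℝ-algebra `A`) satisfies Poincaré duality of dimension `r`: `R^0 ≅ ℝ`, `R^r ≅ ℝ`,
`R^q = 0` for `q > r`, and the multiplication pairings `R^{r-q} × R^q → R^r` are perfect
(expressed by nondegeneracy, which for finite-dimensional graded pieces and all `q ≤ r`
is equivalent to the induced maps `R^{r-q} → Hom(R^q, R^r)` being isomorphisms). -/
def IsPDAlgebra (R : ℕ → Submodule ℝ A) (r : ℕ) : Prop :=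
  Module.finrank ℝ (R 0) = 1 ∧ Module.finrank ℝ (R r) = 1 ∧
  (∀ q, r < q → R q = ⊥) ∧
  (∀ q ≤ r, ∀ x ∈ R (r - q), (∀ y ∈ R q, x * y = 0) → x = 0)

/-- `deg : A →ₗ[ℝ] ℝ` restricts to an isomorphism `R^r ≅ ℝ` (a degree map). -/
def IsDegreeMap (R : ℕ → Submodule ℝ A) (r : ℕ) (deg : A →ₗ[ℝ] ℝ) : Prop :=
  (∀ x ∈ R r, deg x = 0 → x = 0) ∧ ∃ x ∈ R r, deg x = 1

/-- Hard Lefschetz property `HL(ℓ)`: for all `q ≤ r/2`, multiplication by `ℓ^{r-2q}` is an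
isomorphism (i.e. an injective and surjective map) `R^q → R^{r-q}`. -/
def HardLefschetz (R : ℕ → Submodule ℝ A) (r : ℕ) (ℓ : A) : Prop :=
  ∀ q, 2 * q ≤ r →
    (∀ a ∈ R q, ℓ ^ (r - 2 * q) * a = 0 → a = 0) ∧
    (∀ b ∈ R (r - q), ∃ a ∈ R q, ℓ ^ (r - 2 * q) * a = b)

/-- Hodge–Riemann relations `HR(ℓ)`: for all `q ≤ r/2`, the Hodge–Riemann form
`Q_ℓ^q(a,b) = (-1)^q deg(a · ℓ^{r-2q} · b)` is positive definite on the primitive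
subspace `P_ℓ^q = {a ∈ R^q : ℓ^{r-2q+1} a = 0}`. -/
def HodgeRiemann (R : ℕ → Submodule ℝ A) (r : ℕ) (deg : A →ₗ[ℝ] ℝ) (ℓ : A) : Prop :=
  ∀ q, 2 * q ≤ r → ∀ a ∈ R q, a ≠ 0 → ℓ ^ (r - 2 * q + 1) * a = 0 →
    0 < (-1 : ℝ) ^ q * deg (a * (ℓ ^ (r - 2 * q) * a))

end PDAlgebra

/-- Let `R*` be a graded Artinian (finite-dimensional) ℝ-algebra satisfying
Poincaré duality of dimension `r`, and `x ≠ 0` an element of `R^d`.  Then the quotient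
`R*/ann(x)` is a Poincaré duality algebra of dimension `r-d` with degree map induced by
`a ↦ deg(x·a)`.  The degree-`q` piece of the quotient is identified with `x·R^q ⊆ R^{q+d}`,
and the multiplication pairing of classes of `a` and `b` is the class of `x·a·b`. -/
theorem quotient_by_annihilator_isPD {A : Type*} [CommRing A] [Algebra ℝ A]
    [FiniteDimensional ℝ A] (R : ℕ → Submodule ℝ A) [GradedAlgebra R] (r d : ℕ)
    (hPD : IsPDAlgebra R r) (x : A) (hxd : x ∈ R d) (hx : x ≠ 0) :
    Module.finrank ℝ ((R 0).map (LinearMap.mulLeft ℝ x)) = 1 ∧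
    Module.finrank ℝ ((R (r - d)).map (LinearMap.mulLeft ℝ x)) = 1 ∧
    (∀ q, r - d < q → (R q).map (LinearMap.mulLeft ℝ x) = ⊥) ∧
    (∀ q ≤ r - d, ∀ a ∈ R (r - d - q), (∀ b ∈ R q, x * a * b = 0) → x * a = 0) := by
  obtain ⟨h0, hr, htop, hnd⟩ := hPD
  have hdr : d ≤ r := by
    by_contra h
    push_neg at h
    rw [htop d h] at hxd
    exact hx (by simpa using hxd)
  have hmem : ∀ q, ∀ b ∈ R q, x * b ∈ R (d + q) := fun q b hb =>
    SetLike.mul_mem_graded hxd hb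
  refine ⟨?_, ?_, ?_, ?_⟩
  · have hle : Module.finrank ℝ ((R 0).map (LinearMap.mulLeft ℝ x)) ≤ 1 :=
      h0 ▸ Submodule.finrank_map_le _ _
    have hne : (R 0).map (LinearMap.mulLeft ℝ x) ≠ ⊥ := by
      intro hbot
      have h1 : (1 : A) ∈ R 0 := SetLike.one_mem_graded R
      have hxm : x ∈ (R 0).map (LinearMap.mulLeft ℝ x) :=
        ⟨1, h1, by simp [LinearMap.mulLeft]⟩
      rw [hbot] at hxm
      exact hx (by simpa using hxm)
    have hpos : 0 < Module.finrank ℝ ((R 0).map (LinearMap.mulLeft ℝ x)) := by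
      rw [Module.finrank_pos_iff_exists_ne_zero]
      obtain ⟨v, hv, hv0⟩ := Submodule.exists_mem_ne_zero_of_ne_bot hne
      exact ⟨⟨v, hv⟩, by simpa using hv0⟩
    omega
  · have hle : (R (r - d)).map (LinearMap.mulLeft ℝ x) ≤ R r := by
      rintro y ⟨b, hb, rfl⟩
      have := hmem _ b hb
      rwa [Nat.add_sub_cancel' hdr] at this
    have hle1 : Module.finrank ℝ ((R (r - d)).map (LinearMap.mulLeft ℝ x)) ≤ 1 :=
      hr ▸ Submodule.finrank_mono hle
    have hxd' : x ∈ R (r - (r - d)) := by rwa [Nat.sub_sub_self hdr]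
    have hex : ∃ a ∈ R (r - d), x * a ≠ 0 := by
      by_contra h
      push_neg at h
      exact hx (hnd (r - d) (Nat.sub_le r d) x hxd' h)
    obtain ⟨a, ha, ha0⟩ := hex
    have hne : (R (r - d)).map (LinearMap.mulLeft ℝ x) ≠ ⊥ := by
      intro hbot
      have : x * a ∈ (R (r - d)).map (LinearMap.mulLeft ℝ x) :=
        ⟨a, ha, rfl⟩
      rw [hbot] at this
      exact ha0 (by simpa using this)
    have hpos : 0 < Module.finrank ℝ ((R (r - d)).map (LinearMap.mulLeft ℝ x)) := by
      rw [Module.finrank_pos_iff_exists_ne_zero]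
      obtain ⟨v, hv, hv0⟩ := Submodule.exists_mem_ne_zero_of_ne_bot hne
      exact ⟨⟨v, hv⟩, by simpa using hv0⟩
    omega
  · intro q hq
    rw [Submodule.eq_bot_iff]
    rintro y ⟨b, hb, rfl⟩
    have h1 : x * b ∈ R (d + q) := hmem q b hb
    have h2 : R (d + q) = ⊥ := htop _ (by omega)
    rw [h2] at h1
    simpa using h1
  · intro q hq a ha hab
    have h1 : x * a ∈ R (d + (r - d - q)) := hmem _ a ha
    have h2 : d + (r - d - q) = r - q := by omega
    rw [h2] at h1
    exact hnd q (by omega) (x * a) h1 hab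
end

section
/- Let R* be a Poincaré duality algebra of dimension r satisfying HL(ℓ). Then R* satisfies HR(ℓ) if and only if for all q ≤ r/2 the Hodge–Riemann form Q_ℓ^q on R^q is nondegenerate with signature Σ_{p=0}^q (−1)^{q−p}(dim R^p − dim R^{p−1}). -/
open Module

namespace HRaux

variable {A : Type*} [CommRing A] [Algebra ℝ A]
variable (R : ℕ → Submodule ℝ A) [GradedAlgebra R]

lemma pow_mem {ℓ : A} (hℓ : ℓ ∈ R 1) (k : ℕ) : ℓ ^ k ∈ R k := by
  simpa using SetLike.pow_mem_graded k hℓ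

lemma mul_mem' {i j : ℕ} {a b : A} (ha : a ∈ R i) (hb : b ∈ R j) : a * b ∈ R (i + j) :=
  SetLike.mul_mem_graded ha hb

variable {r : ℕ} {deg : A →ₗ[ℝ] ℝ} {ℓ : A}

lemma nondeg (hPD : IsPDAlgebra R r) (hdeg : IsDegreeMap R r deg)
    (hℓ : ℓ ∈ R 1) (hHL : HardLefschetz R r ℓ)
    {q : ℕ} (hq : 2 * q ≤ r) {a : A} (ha : a ∈ R q)
    (h : ∀ b ∈ R q, deg (a * (ℓ ^ (r - 2 * q) * b)) = 0) : a = 0 := by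
  have hx : ℓ ^ (r - 2 * q) * a ∈ R (r - q) := by
    have := mul_mem' R (pow_mem R hℓ (r - 2 * q)) ha
    rwa [show r - 2 * q + q = r - q by omega] at this
  have hzero : ∀ y ∈ R q, (ℓ ^ (r - 2 * q) * a) * y = 0 := by
    intro y hy
    have hmem : (ℓ ^ (r - 2 * q) * a) * y ∈ R r := by
      have := mul_mem' R hx hy
      rwa [show r - q + q = r by omega] at this
    apply hdeg.1 _ hmem
    rw [show (ℓ ^ (r - 2 * q) * a) * y = a * (ℓ ^ (r - 2 * q) * y) by ring]
    exact h y hy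
  exact (hHL q hq).1 a ha (hPD.2.2.2 q (by omega) _ hx hzero)

lemma l_inj (hHL : HardLefschetz R r ℓ) {q : ℕ} (hq : 2 * q < r)
    {a : A} (ha : a ∈ R q) (h : ℓ * a = 0) : a = 0 := by
  apply (hHL q (by omega)).1 a ha
  have h2 : ℓ ^ (r - 2 * q) * a = ℓ ^ (r - 2 * q - 1) * (ℓ * a) := by
    conv_lhs => rw [show r - 2 * q = (r - 2 * q - 1) + 1 by omega]
    ring
  rw [h2, h, mul_zero]

lemma decomp (hℓ : ℓ ∈ R 1) (hHL : HardLefschetz R r ℓ)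
    {q : ℕ} (hq : 2 * (q + 1) ≤ r) {a : A} (ha : a ∈ R (q + 1)) :
    ∃ p b, p ∈ R (q + 1) ∧ ℓ ^ (r - 2 * (q + 1) + 1) * p = 0 ∧ b ∈ R q ∧ a = p + ℓ * b := by
  have hmem : ℓ ^ (r - 2 * (q + 1) + 1) * a ∈ R (r - q) := by
    have := mul_mem' R (pow_mem R hℓ (r - 2 * (q + 1) + 1)) ha
    rwa [show r - 2 * (q + 1) + 1 + (q + 1) = r - q by omega] at this
  obtain ⟨b, hb, hbeq⟩ := (hHL q (by omega)).2 _ hmem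
  refine ⟨a - ℓ * b, b, ?_, ?_, hb, by ring⟩
  · refine Submodule.sub_mem _ ha ?_
    have := mul_mem' R hℓ hb
    rwa [add_comm] at this
  · have h2 : ℓ ^ (r - 2 * (q + 1) + 1) * (a - ℓ * b) =
        ℓ ^ (r - 2 * (q + 1) + 1) * a - ℓ ^ (r - 2 * q) * b := by
      rw [show r - 2 * q = (r - 2 * (q + 1) + 1) + 1 by omega]; ring
    rw [h2, hbeq, sub_self]

lemma prim_unique (hHL : HardLefschetz R r ℓ)
    {q : ℕ} (hq : 2 * (q + 1) ≤ r) {p b : A} (hp : p ∈ R (q + 1))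
    (hprim : ℓ ^ (r - 2 * (q + 1) + 1) * p = 0) (hb : b ∈ R q) (h : p + ℓ * b = 0) :
    p = 0 ∧ b = 0 := by
  have hb0 : b = 0 := by
    apply (hHL q (by omega)).1 b hb
    have hp' : p = -(ℓ * b) := by linear_combination h
    have h2 : ℓ ^ (r - 2 * q) * b = -(ℓ ^ (r - 2 * (q + 1) + 1) * p) := by
      rw [hp', show r - 2 * q = (r - 2 * (q + 1) + 1) + 1 by omega]; ring
    rw [h2, hprim, neg_zero]
  subst hb0
  constructor
  · rw [mul_zero, add_zero] at h; exact h
  · rfl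

lemma deg_add_add (deg : A →ₗ[ℝ] ℝ) (c x y : A) :
    deg ((x + y) * (c * (x + y))) =
      deg (x * (c * x)) + 2 * deg (x * (c * y)) + deg (y * (c * y)) := by
  have h : (x + y) * (c * (x + y)) = x * (c * x) + (x * (c * y) + x * (c * y)) + y * (c * y) := by
    ring
  rw [h, map_add, map_add, map_add]; ring

lemma deg_symm (deg : A →ₗ[ℝ] ℝ) (c x y : A) :
    deg (x * (c * y)) = deg (y * (c * x)) := by
  rw [show x * (c * y) = y * (c * x) by ring]

lemma deg_smul_left (deg : A →ₗ[ℝ] ℝ) (c x y : A) (t : ℝ) :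
    deg ((t • x) * (c * y)) = t * deg (x * (c * y)) := by
  rw [smul_mul_assoc, map_smul, smul_eq_mul]

lemma sum_alt_succ (D : ℕ → ℤ) (q : ℕ) :
    ∑ p ∈ Finset.range (q + 1 + 1), (-1 : ℤ) ^ (q + 1 - p) *
        (D p - if p = 0 then 0 else D (p - 1)) =
      (D (q + 1) - D q) -
        ∑ p ∈ Finset.range (q + 1), (-1 : ℤ) ^ (q - p) *
          (D p - if p = 0 then 0 else D (p - 1)) := by
  rw [Finset.sum_range_succ]
  have h1 : ∑ p ∈ Finset.range (q + 1), (-1 : ℤ) ^ (q + 1 - p) *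
      (D p - if p = 0 then 0 else D (p - 1)) =
      ∑ p ∈ Finset.range (q + 1), -((-1 : ℤ) ^ (q - p) *
        (D p - if p = 0 then 0 else D (p - 1))) := by
    apply Finset.sum_congr rfl
    intro p hp
    rw [Finset.mem_range] at hp
    rw [show q + 1 - p = (q - p) + 1 by omega, pow_succ]
    ring
  rw [h1, Finset.sum_neg_distrib, if_neg (Nat.succ_ne_zero q), Nat.sub_self, pow_zero,
    Nat.add_sub_cancel]
  ring

lemma finrank_map_subtype (p : Submodule ℝ A) (S : Submodule ℝ p) :
    finrank ℝ (S.map p.subtype) = finrank ℝ S :=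
  (Submodule.equivMapOfInjective _ (Submodule.injective_subtype p) S).finrank_eq.symm

lemma finrank_map_mulLeft [FiniteDimensional ℝ A] (hHL : HardLefschetz R r ℓ)
    {q : ℕ} (hq : 2 * q < r) (S : Submodule ℝ A) (hS : S ≤ R q) :
    finrank ℝ (S.map (LinearMap.mulLeft ℝ ℓ)) = finrank ℝ S := by
  have h0 : ∀ x : S, (LinearMap.mulLeft ℝ ℓ).comp S.subtype x = 0 → x = 0 := by
    intro x hx
    have hx' : ℓ * (x : A) = 0 := hx
    exact Subtype.ext (l_inj R hHL hq (hS x.2) hx')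
  have hinjf : Function.Injective ((LinearMap.mulLeft ℝ ℓ).comp S.subtype) :=
    LinearMap.ker_eq_bot.mp (LinearMap.ker_eq_bot'.mpr h0)
  have := LinearMap.finrank_range_of_inj hinjf
  rwa [LinearMap.range_comp, Submodule.range_subtype] at this

end HRaux

namespace Step2

variable {A : Type*} [CommRing A] [Algebra ℝ A]
variable (R : ℕ → Submodule ℝ A) [GradedAlgebra R]
variable {r : ℕ} {deg : A →ₗ[ℝ] ℝ} {ℓ : A}

lemma deg_smul_right (deg : A →ₗ[ℝ] ℝ) (c x y : A) (t : ℝ) :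
    deg (x * (c * (t • y))) = t * deg (x * (c * y)) := by
  rw [mul_smul_comm, mul_smul_comm, map_smul, smul_eq_mul]

lemma deg_mul_l_l (deg : A →ₗ[ℝ] ℝ) (ℓ : A) {r q : ℕ} (hq : 2 * (q + 1) ≤ r) (x y : A) :
    deg ((ℓ * x) * (ℓ ^ (r - 2 * (q + 1)) * (ℓ * y))) = deg (x * (ℓ ^ (r - 2 * q) * y)) := by
  rw [show r - 2 * q = r - 2 * (q + 1) + 2 by omega]
  exact congrArg deg (by ring)

lemma deg_prim_l (deg : A →ₗ[ℝ] ℝ) (ℓ : A) (m : ℕ) (x y : A)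
    (hx : ℓ ^ (m + 1) * x = 0) : deg (x * (ℓ ^ m * (ℓ * y))) = 0 := by
  have h2 : x * (ℓ ^ m * (ℓ * y)) = (ℓ ^ (m + 1) * x) * y := by ring
  rw [h2, hx, zero_mul, map_zero]

open HRaux in
lemma forward [FiniteDimensional ℝ A] (hPD : IsPDAlgebra R r) (hdeg : IsDegreeMap R r deg)
    (hℓ : ℓ ∈ R 1) (hHL : HardLefschetz R r ℓ) (hHR : HodgeRiemann R r deg ℓ) :
    ∀ q, 2 * q ≤ r →
      ∃ P N : Submodule ℝ (R q), IsCompl P N ∧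
        (∀ v ∈ P, v ≠ 0 → 0 < (-1 : ℝ) ^ q * deg ((v : A) * (ℓ ^ (r - 2 * q) * (v : A)))) ∧
        (∀ v ∈ N, v ≠ 0 → (-1 : ℝ) ^ q * deg ((v : A) * (ℓ ^ (r - 2 * q) * (v : A))) < 0) ∧
        (∀ v ∈ P, ∀ w ∈ N, deg ((v : A) * (ℓ ^ (r - 2 * q) * (w : A))) = 0) ∧
        (Module.finrank ℝ P : ℤ) - (Module.finrank ℝ N : ℤ) =
          ∑ p ∈ Finset.range (q + 1), (-1 : ℤ) ^ (q - p) *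
            ((Module.finrank ℝ (R p) : ℤ) -
              (if p = 0 then 0 else (Module.finrank ℝ (R (p - 1)) : ℤ))) := by
  intro q
  induction q with
  | zero =>
    intro hq
    refine ⟨⊤, ⊥, isCompl_top_bot, ?_, ?_, ?_, ?_⟩
    · intro v _ hv0
      have hprim : ℓ ^ (r - 2 * 0 + 1) * (v : A) = 0 := by
        have hmem := mul_mem' R (pow_mem R hℓ (r - 2 * 0 + 1)) v.2
        rw [show r - 2 * 0 + 1 + 0 = r + 1 by omega, hPD.2.2.1 (r + 1) (by omega)] at hmem
        simpa using hmem
      exact hHR 0 (by omega) (v : A) v.2 (fun h => hv0 (Subtype.ext h)) hprim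
    · intro v hv
      rw [Submodule.mem_bot] at hv
      intro hv0; exact absurd hv hv0
    · intro v _ w hw
      rw [Submodule.mem_bot] at hw
      subst hw
      simp
    · rw [finrank_top, finrank_bot]
      simp [hPD.1]
  | succ q ih =>
    intro hq
    obtain ⟨P', N', hc', hpos', hneg', horth', hdim'⟩ := ih (by omega)
    have hq' : 2 * q < r := by omega
    have hPrA_mem : ∀ x : A,
        x ∈ R (q + 1) ⊓ LinearMap.ker (LinearMap.mulLeft ℝ (ℓ ^ (r - 2 * (q + 1) + 1))) ↔
          x ∈ R (q + 1) ∧ ℓ ^ (r - 2 * (q + 1) + 1) * x = 0 := by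
      intro x
      rw [Submodule.mem_inf, LinearMap.mem_ker, LinearMap.mulLeft_apply]
    have hPA'le : P'.map (R q).subtype ≤ R q := Submodule.map_subtype_le _ _
    have hNA'le : N'.map (R q).subtype ≤ R q := Submodule.map_subtype_le _ _
    have hmulmem : ∀ x ∈ R q, ℓ * x ∈ R (q + 1) := by
      intro x hx
      have := mul_mem' R hℓ hx
      rwa [add_comm] at this
    have hPN'disj : ∀ x, x ∈ P'.map (R q).subtype → x ∈ N'.map (R q).subtype → x = 0 := by
      rintro x ⟨u, hu, rfl⟩ ⟨w, hw, hwx⟩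
      have huw : w = u := Subtype.ext hwx
      rw [huw] at hw
      have h0 := Submodule.disjoint_def.mp hc'.disjoint u hu hw
      rw [h0]; rfl
    have hLPle : (P'.map (R q).subtype).map (LinearMap.mulLeft ℝ ℓ) ≤ R (q + 1) := by
      rintro x ⟨w, hw, rfl⟩
      exact hmulmem w (hPA'le hw)
    have hLNle : (N'.map (R q).subtype).map (LinearMap.mulLeft ℝ ℓ) ≤ R (q + 1) := by
      rintro x ⟨w, hw, rfl⟩
      exact hmulmem w (hNA'le hw)
    have hPrle : R (q + 1) ⊓ LinearMap.ker (LinearMap.mulLeft ℝ (ℓ ^ (r - 2 * (q + 1) + 1)))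
        ≤ R (q + 1) := inf_le_left
    have hPle : (R (q + 1) ⊓ LinearMap.ker (LinearMap.mulLeft ℝ (ℓ ^ (r - 2 * (q + 1) + 1))))
        ⊔ (N'.map (R q).subtype).map (LinearMap.mulLeft ℝ ℓ) ≤ R (q + 1) :=
      sup_le hPrle hLNle
    have hs : (-1 : ℝ) ^ (q + 1) = -(-1 : ℝ) ^ q := by rw [pow_succ]; ring
    refine ⟨Submodule.comap (R (q + 1)).subtype
        ((R (q + 1) ⊓ LinearMap.ker (LinearMap.mulLeft ℝ (ℓ ^ (r - 2 * (q + 1) + 1))))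
          ⊔ (N'.map (R q).subtype).map (LinearMap.mulLeft ℝ ℓ)),
      Submodule.comap (R (q + 1)).subtype
        ((P'.map (R q).subtype).map (LinearMap.mulLeft ℝ ℓ)), ⟨?_, ?_⟩, ?_, ?_, ?_, ?_⟩
    · -- disjoint
      rw [Submodule.disjoint_def]
      intro v hv1 hv2
      rw [Submodule.mem_comap] at hv1 hv2
      obtain ⟨y, hy, z, hz, heq⟩ := Submodule.mem_sup.mp hv1
      obtain ⟨n, hn, rfl⟩ := hz
      obtain ⟨w, hw, hwv⟩ := hv2
      have hyprim : ℓ ^ (r - 2 * (q + 1) + 1) * y = 0 := ((hPrA_mem y).mp hy).2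
      have h1 : y + ℓ * n = (v : A) := heq
      have h2 : ℓ * w = (v : A) := hwv
      have hnw : n - w ∈ R q := Submodule.sub_mem _ (hNA'le hn) (hPA'le hw)
      have hsum : y + ℓ * (n - w) = 0 := by linear_combination h1 - h2
      obtain ⟨hy0, hnw0⟩ := prim_unique R hHL hq (hPrle hy) hyprim hnw hsum
      have hnweq : n = w := sub_eq_zero.mp hnw0
      have hn0 : n = 0 := hPN'disj n (hnweq ▸ hw) hn
      apply Subtype.ext
      rw [← h1, hy0, hn0, mul_zero, add_zero]
      rfl
    · -- codisjoint
      rw [codisjoint_iff, eq_top_iff]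
      intro v _
      obtain ⟨p, b, hpmem, hpprim, hb, hvdecomp⟩ := decomp R hℓ hHL hq v.2
      have hbelem : (⟨b, hb⟩ : R q) ∈ P' ⊔ N' := by
        rw [hc'.codisjoint.eq_top]; trivial
      obtain ⟨u, hu, w, hw, huw⟩ := Submodule.mem_sup.mp hbelem
      have hbeq : b = (u : A) + (w : A) := (congrArg Subtype.val huw).symm
      rw [Submodule.mem_sup]
      refine ⟨⟨p + ℓ * (w : A), Submodule.add_mem _ hpmem (hmulmem _ w.2)⟩, ?_,
        ⟨ℓ * (u : A), hmulmem _ u.2⟩, ?_, ?_⟩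
      · rw [Submodule.mem_comap]
        exact Submodule.add_mem_sup ((hPrA_mem p).mpr ⟨hpmem, hpprim⟩)
          ⟨(w : A), ⟨w, hw, rfl⟩, rfl⟩
      · rw [Submodule.mem_comap]
        exact ⟨(u : A), ⟨u, hu, rfl⟩, rfl⟩
      · apply Subtype.ext
        show (p + ℓ * (w : A)) + ℓ * (u : A) = (v : A)
        rw [hvdecomp, hbeq]
        ring
    · -- positivity on P
      intro v hv hv0
      rw [Submodule.mem_comap] at hv
      obtain ⟨y, hy, z, hz, heq⟩ := Submodule.mem_sup.mp hv
      obtain ⟨x, hx, rfl⟩ := hz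
      obtain ⟨u, hu, rfl⟩ := hx
      have hyprim : ℓ ^ (r - 2 * (q + 1) + 1) * y = 0 := ((hPrA_mem y).mp hy).2
      have heq' : y + ℓ * (u : A) = (v : A) := heq
      rw [← heq', deg_add_add, deg_prim_l deg ℓ (r - 2 * (q + 1)) y (u : A) hyprim,
        deg_mul_l_l deg ℓ hq (u : A) (u : A)]
      have hnotboth : y ≠ 0 ∨ u ≠ 0 := by
        by_contra hcon
        push_neg at hcon
        apply hv0
        apply Subtype.ext
        rw [← heq', hcon.1, hcon.2]
        simp
      have ht1 : (0 ≤ (-1 : ℝ) ^ (q + 1) * deg (y * (ℓ ^ (r - 2 * (q + 1)) * y))) ∧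
          (y ≠ 0 → 0 < (-1 : ℝ) ^ (q + 1) * deg (y * (ℓ ^ (r - 2 * (q + 1)) * y))) := by
        by_cases hy0 : y = 0
        · subst hy0; simp
        · have := hHR (q + 1) hq y ((hPrA_mem y).mp hy).1 hy0 hyprim
          exact ⟨le_of_lt this, fun _ => this⟩
      have ht2 : (0 ≤ -((-1 : ℝ) ^ q * deg ((u : A) * (ℓ ^ (r - 2 * q) * (u : A))))) ∧
          (u ≠ 0 → 0 < -((-1 : ℝ) ^ q * deg ((u : A) * (ℓ ^ (r - 2 * q) * (u : A))))) := by
        by_cases hu0 : u = 0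
        · subst hu0; simp
        · have := hneg' u hu hu0
          exact ⟨by linarith, fun _ => by linarith⟩
      have key : (-1 : ℝ) ^ (q + 1) * (deg (y * (ℓ ^ (r - 2 * (q + 1)) * y)) + 2 * 0 +
          deg ((u : A) * (ℓ ^ (r - 2 * q) * (u : A)))) =
          (-1 : ℝ) ^ (q + 1) * deg (y * (ℓ ^ (r - 2 * (q + 1)) * y)) +
          -((-1 : ℝ) ^ q * deg ((u : A) * (ℓ ^ (r - 2 * q) * (u : A)))) := by
        rw [hs]; ring
      rw [key]
      rcases hnotboth with h | h
      · linarith [ht1.2 h, ht2.1]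
      · linarith [ht1.1, ht2.2 h]
    · -- negativity on N
      intro v hv hv0
      rw [Submodule.mem_comap] at hv
      obtain ⟨x, hx, hxv⟩ := hv
      obtain ⟨u, hu, rfl⟩ := hx
      have heq' : ℓ * (u : A) = (v : A) := hxv
      have hu0 : u ≠ 0 := by
        rintro rfl
        apply hv0
        apply Subtype.ext
        rw [← heq']
        simp
      have hposu := hpos' u hu hu0
      rw [← heq', deg_mul_l_l deg ℓ hq (u : A) (u : A), hs]
      linarith
    · -- orthogonality
      intro v hv w hw
      rw [Submodule.mem_comap] at hv hw
      obtain ⟨y, hy, z, hz, heq⟩ := Submodule.mem_sup.mp hv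
      obtain ⟨x, hx, rfl⟩ := hz
      obtain ⟨n, hn, rfl⟩ := hx
      obtain ⟨x2, hx2, hx2w⟩ := hw
      obtain ⟨u, hu, rfl⟩ := hx2
      have heq' : y + ℓ * (n : A) = (v : A) := heq
      have heqw : ℓ * (u : A) = (w : A) := hx2w
      have hyprim : ℓ ^ (r - 2 * (q + 1) + 1) * y = 0 := ((hPrA_mem y).mp hy).2
      rw [← heq', ← heqw]
      have hsplit : (y + ℓ * (n : A)) * (ℓ ^ (r - 2 * (q + 1)) * (ℓ * (u : A))) =
          y * (ℓ ^ (r - 2 * (q + 1)) * (ℓ * (u : A))) +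
          (ℓ * (n : A)) * (ℓ ^ (r - 2 * (q + 1)) * (ℓ * (u : A))) := by ring
      rw [hsplit, map_add, deg_prim_l deg ℓ (r - 2 * (q + 1)) y (u : A) hyprim,
        deg_mul_l_l deg ℓ hq (n : A) (u : A), zero_add, deg_symm]
      exact horth' u hu n hn
    · -- dimensions
      have hPrLN_inf : ∀ x, x ∈ R (q + 1) ⊓ LinearMap.ker
          (LinearMap.mulLeft ℝ (ℓ ^ (r - 2 * (q + 1) + 1))) →
          x ∈ (N'.map (R q).subtype).map (LinearMap.mulLeft ℝ ℓ) → x = 0 := by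
        intro x hx1 hx2
        obtain ⟨y, hy, rfl⟩ := hx2
        have hprim := ((hPrA_mem _).mp hx1).2
        have h := prim_unique R hHL hq (hLNle ⟨y, hy, rfl⟩) hprim
          (Submodule.neg_mem _ (hNA'le hy)) (by show ℓ * y + ℓ * (-y) = 0; ring)
        exact h.1
      have hsupRq : (R (q + 1) ⊓ LinearMap.ker (LinearMap.mulLeft ℝ (ℓ ^ (r - 2 * (q + 1) + 1))))
          ⊔ (R q).map (LinearMap.mulLeft ℝ ℓ) = R (q + 1) := by
        apply le_antisymm
        · apply sup_le hPrle
          rintro x ⟨y, hy, rfl⟩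
          exact hmulmem y hy
        · intro a ha
          obtain ⟨p, b, hpmem, hpprim, hb, rfl⟩ := decomp R hℓ hHL hq ha
          exact Submodule.add_mem_sup ((hPrA_mem p).mpr ⟨hpmem, hpprim⟩) ⟨b, hb, rfl⟩
      have hinfRq : (R (q + 1) ⊓ LinearMap.ker (LinearMap.mulLeft ℝ (ℓ ^ (r - 2 * (q + 1) + 1))))
          ⊓ (R q).map (LinearMap.mulLeft ℝ ℓ) = ⊥ := by
        rw [eq_bot_iff]
        rintro x ⟨hx1, y, hy, rfl⟩
        have hprim := ((hPrA_mem _).mp hx1).2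
        have h := prim_unique R hHL hq (hmulmem y hy) hprim (Submodule.neg_mem _ hy)
          (by show ℓ * y + ℓ * (-y) = 0; ring)
        rw [Submodule.mem_bot]
        exact h.1
      have hfr1 : finrank ℝ ↥(R (q + 1) ⊓ LinearMap.ker
            (LinearMap.mulLeft ℝ (ℓ ^ (r - 2 * (q + 1) + 1)))) + finrank ℝ (R q) =
          finrank ℝ (R (q + 1)) := by
        have h := Submodule.finrank_sup_add_finrank_inf_eq
          (R (q + 1) ⊓ LinearMap.ker (LinearMap.mulLeft ℝ (ℓ ^ (r - 2 * (q + 1) + 1))))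
          ((R q).map (LinearMap.mulLeft ℝ ℓ))
        rw [hsupRq, hinfRq, finrank_bot, add_zero,
          finrank_map_mulLeft R hHL hq' (R q) le_rfl] at h
        exact h.symm
      have hfrLP : finrank ℝ ((P'.map (R q).subtype).map (LinearMap.mulLeft ℝ ℓ)) =
          finrank ℝ P' := by
        rw [finrank_map_mulLeft R hHL hq' _ hPA'le, finrank_map_subtype]
      have hfrLN : finrank ℝ ((N'.map (R q).subtype).map (LinearMap.mulLeft ℝ ℓ)) =
          finrank ℝ N' := by
        rw [finrank_map_mulLeft R hHL hq' _ hNA'le, finrank_map_subtype]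
      have hfrP : finrank ℝ (Submodule.comap (R (q + 1)).subtype
          ((R (q + 1) ⊓ LinearMap.ker (LinearMap.mulLeft ℝ (ℓ ^ (r - 2 * (q + 1) + 1))))
            ⊔ (N'.map (R q).subtype).map (LinearMap.mulLeft ℝ ℓ))) =
          finrank ℝ ↥(R (q + 1) ⊓ LinearMap.ker
            (LinearMap.mulLeft ℝ (ℓ ^ (r - 2 * (q + 1) + 1)))) + finrank ℝ N' := by
        rw [(Submodule.comapSubtypeEquivOfLe hPle).finrank_eq]
        have h := Submodule.finrank_sup_add_finrank_inf_eq
          (R (q + 1) ⊓ LinearMap.ker (LinearMap.mulLeft ℝ (ℓ ^ (r - 2 * (q + 1) + 1))))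
          ((N'.map (R q).subtype).map (LinearMap.mulLeft ℝ ℓ))
        have hbot : (R (q + 1) ⊓ LinearMap.ker (LinearMap.mulLeft ℝ (ℓ ^ (r - 2 * (q + 1) + 1))))
            ⊓ (N'.map (R q).subtype).map (LinearMap.mulLeft ℝ ℓ) = ⊥ := by
          rw [eq_bot_iff]
          rintro x ⟨hx1, hx2⟩
          rw [Submodule.mem_bot]
          exact hPrLN_inf x hx1 hx2
        rw [hbot, finrank_bot, add_zero] at h
        rw [h, hfrLN]
      have hfrN : finrank ℝ (Submodule.comap (R (q + 1)).subtype
          ((P'.map (R q).subtype).map (LinearMap.mulLeft ℝ ℓ))) = finrank ℝ P' := by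
        rw [(Submodule.comapSubtypeEquivOfLe hLPle).finrank_eq, hfrLP]
      have key := sum_alt_succ (fun p => (finrank ℝ (R p) : ℤ)) q
      rw [hfrP, hfrN]
      have hfr1' : (finrank ℝ ↥(R (q + 1) ⊓ LinearMap.ker
            (LinearMap.mulLeft ℝ (ℓ ^ (r - 2 * (q + 1) + 1)))) : ℤ) =
          (finrank ℝ (R (q + 1)) : ℤ) - (finrank ℝ (R q) : ℤ) := by
        have := congrArg (Nat.cast : ℕ → ℤ) hfr1
        push_cast at this
        linarith
      push_cast
      linarith [key, hdim', hfr1']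

end Step2

/-- Let `R*` be a Poincaré duality algebra of dimension `r` satisfying
`HL(ℓ)`.  Then `R*` satisfies `HR(ℓ)` if and only if for all `q ≤ r/2` the Hodge–Riemann
form `Q_ℓ^q` on `R^q` is nondegenerate with signature
`Σ_{p=0}^q (-1)^{q-p}(dim R^p - dim R^{p-1})` (with `dim R^{-1} = 0`).
Having signature `s` is expressed by the existence of complementary, mutually
`Q`-orthogonal subspaces `P`, `N` on which `Q` is positive, resp. negative, definite,
with `dim P - dim N = s`. -/
theorem hodgeRiemann_iff_signature {A : Type*} [CommRing A] [Algebra ℝ A]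
    [FiniteDimensional ℝ A] (R : ℕ → Submodule ℝ A) [GradedAlgebra R] (r : ℕ)
    (hPD : IsPDAlgebra R r) (deg : A →ₗ[ℝ] ℝ) (hdeg : IsDegreeMap R r deg)
    (ℓ : A) (hℓ : ℓ ∈ R 1) (hHL : HardLefschetz R r ℓ) :
    HodgeRiemann R r deg ℓ ↔
      ∀ q, 2 * q ≤ r →
        ((∀ a : R q, (∀ b : R q, deg ((a : A) * (ℓ ^ (r - 2 * q) * (b : A))) = 0) → a = 0) ∧
         ∃ P N : Submodule ℝ (R q), IsCompl P N ∧
           (∀ v ∈ P, v ≠ 0 → 0 < (-1 : ℝ) ^ q * deg ((v : A) * (ℓ ^ (r - 2 * q) * (v : A)))) ∧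
           (∀ v ∈ N, v ≠ 0 → (-1 : ℝ) ^ q * deg ((v : A) * (ℓ ^ (r - 2 * q) * (v : A))) < 0) ∧
           (∀ v ∈ P, ∀ w ∈ N, deg ((v : A) * (ℓ ^ (r - 2 * q) * (w : A))) = 0) ∧
           (Module.finrank ℝ P : ℤ) - (Module.finrank ℝ N : ℤ) =
             ∑ p ∈ Finset.range (q + 1), (-1 : ℤ) ^ (q - p) *
               ((Module.finrank ℝ (R p) : ℤ) -
                 (if p = 0 then 0 else (Module.finrank ℝ (R (p - 1)) : ℤ)))) := by
  constructor
  · intro hHR q hq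
    constructor
    · intro a ha
      apply Subtype.ext
      refine HRaux.nondeg R hPD hdeg hℓ hHL hq a.2 ?_
      intro b hb
      exact ha ⟨b, hb⟩
    · exact Step2.forward R hPD hdeg hℓ hHL hHR q hq
  · intro hsig q hq a haR ha0 hprim
    rcases q with _ | q
    · -- q = 0
      obtain ⟨-, P, N, hc, hpos, -, -, hdim⟩ := hsig 0 hq
      have hPN := Submodule.finrank_add_eq_of_isCompl hc
      have hsum0 : ∑ p ∈ Finset.range (0 + 1), (-1 : ℤ) ^ (0 - p) *
          ((finrank ℝ (R p) : ℤ) - if p = 0 then 0 else (finrank ℝ (R (p - 1)) : ℤ)) =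
          (finrank ℝ (R 0) : ℤ) := by
        simp
      rw [hsum0] at hdim
      have hN0 : finrank ℝ N = 0 := by omega
      have hNbot : N = ⊥ := Submodule.finrank_eq_zero.mp hN0
      have hPtop : P = ⊤ := by
        have h := hc.codisjoint
        rw [hNbot] at h
        simpa [codisjoint_iff] using h
      exact hpos ⟨a, haR⟩ (by rw [hPtop]; trivial) (fun h => ha0 (congrArg Subtype.val h))
    · -- q + 1
      obtain ⟨-, P, N, hc, hpos, hneg, horth, hdim⟩ := hsig (q + 1) hq
      obtain ⟨-, P', N', hc', hpos', hneg', horth', hdim'⟩ := hsig q (by omega)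
      by_contra hcon
      push_neg at hcon
      have hq2 : 2 * q < r := by omega
      -- Step A: produce a strictly negative primitive vector a₂
      obtain ⟨a₂, ha₂R, ha₂prim, ha₂neg⟩ :
          ∃ a₂, a₂ ∈ R (q + 1) ∧ ℓ ^ (r - 2 * (q + 1) + 1) * a₂ = 0 ∧
            (-1 : ℝ) ^ (q + 1) * deg (a₂ * (ℓ ^ (r - 2 * (q + 1)) * a₂)) < 0 := by
        rcases lt_or_eq_of_le hcon with hlt | heq0
        · exact ⟨a, haR, hprim, hlt⟩
        · have hex : ∃ b, b ∈ R (q + 1) ∧ ℓ ^ (r - 2 * (q + 1) + 1) * b = 0 ∧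
              deg (a * (ℓ ^ (r - 2 * (q + 1)) * b)) ≠ 0 := by
            by_contra hno
            push_neg at hno
            apply ha0
            refine HRaux.nondeg R hPD hdeg hℓ hHL hq haR ?_
            intro y hy
            obtain ⟨p, b, hpmem, hpprim, hb, rfl⟩ := HRaux.decomp R hℓ hHL hq hy
            have hsplit : a * (ℓ ^ (r - 2 * (q + 1)) * (p + ℓ * b)) =
                a * (ℓ ^ (r - 2 * (q + 1)) * p) + a * (ℓ ^ (r - 2 * (q + 1)) * (ℓ * b)) := by
              ring
            rw [hsplit, map_add, hno p hpmem hpprim,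
              Step2.deg_prim_l deg ℓ (r - 2 * (q + 1)) a b hprim, add_zero]
          obtain ⟨b, hbR, hbprim, hbne⟩ := hex
          set β : ℝ := (-1 : ℝ) ^ (q + 1) * deg (a * (ℓ ^ (r - 2 * (q + 1)) * b)) with hβ
          have hβne : β ≠ 0 :=
            mul_ne_zero (pow_ne_zero _ (by norm_num)) hbne
          set c : ℝ := (-1 : ℝ) ^ (q + 1) * deg (b * (ℓ ^ (r - 2 * (q + 1)) * b)) with hcdef
          set t : ℝ := -((c + 1) / (2 * β)) with htdef
          refine ⟨t • a + b, Submodule.add_mem _ (Submodule.smul_mem _ t haR) hbR, ?_, ?_⟩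
          · have h2 : ℓ ^ (r - 2 * (q + 1) + 1) * (t • a + b) =
                t • (ℓ ^ (r - 2 * (q + 1) + 1) * a) + ℓ ^ (r - 2 * (q + 1) + 1) * b := by
              rw [mul_add, mul_smul_comm]
            rw [h2, hprim, hbprim, smul_zero, add_zero]
          · rw [HRaux.deg_add_add, HRaux.deg_smul_left, Step2.deg_smul_right,
              HRaux.deg_smul_left]
            have hdaa : (-1 : ℝ) ^ (q + 1) * deg (a * (ℓ ^ (r - 2 * (q + 1)) * a)) = 0 :=
              heq0
            have hrw : (-1 : ℝ) ^ (q + 1) * (t * (t * deg (a * (ℓ ^ (r - 2 * (q + 1)) * a))) +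
                2 * (t * deg (a * (ℓ ^ (r - 2 * (q + 1)) * b))) +
                deg (b * (ℓ ^ (r - 2 * (q + 1)) * b))) =
                t * t * ((-1 : ℝ) ^ (q + 1) * deg (a * (ℓ ^ (r - 2 * (q + 1)) * a))) +
                  2 * t * β + c := by
              rw [hβ, hcdef]; ring
            rw [hrw, hdaa]
            have hval : t * t * 0 + 2 * t * β + c = -1 := by
              rw [htdef]; field_simp; ring
            linarith [hval]
      have ha₂0 : a₂ ≠ 0 := by
        intro h
        rw [h] at ha₂neg
        simp at ha₂neg
      have hPA''le : P'.map (R q).subtype ≤ R q := Submodule.map_subtype_le _ _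
      have hLP'le : (P'.map (R q).subtype).map (LinearMap.mulLeft ℝ ℓ) ≤ R (q + 1) := by
        rintro x ⟨y, hy, rfl⟩
        have := HRaux.mul_mem' R hℓ (hPA''le hy)
        rwa [add_comm] at this
      -- negative definiteness on N₂ = span{a₂} ⊔ ℓ·P'
      have hN₂neg : ∀ x ∈ (ℝ ∙ a₂) ⊔ (P'.map (R q).subtype).map (LinearMap.mulLeft ℝ ℓ),
          x ≠ 0 → (-1 : ℝ) ^ (q + 1) * deg (x * (ℓ ^ (r - 2 * (q + 1)) * x)) < 0 := by
        intro x hx hx0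
        obtain ⟨y, hy, z, hz, heqx⟩ := Submodule.mem_sup.mp hx
        obtain ⟨t, rfl⟩ := Submodule.mem_span_singleton.mp hy
        obtain ⟨w, hw, rfl⟩ := hz
        obtain ⟨u, hu, rfl⟩ := hw
        have hzeq : (LinearMap.mulLeft ℝ ℓ) ((R q).subtype u) = ℓ * (u : A) := rfl
        rw [← heqx, hzeq]
        rw [HRaux.deg_add_add, HRaux.deg_smul_left, Step2.deg_smul_right, HRaux.deg_smul_left,
          Step2.deg_prim_l deg ℓ (r - 2 * (q + 1)) a₂ (u : A) ha₂prim,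
          Step2.deg_mul_l_l deg ℓ hq (u : A) (u : A)]
        have hs : (-1 : ℝ) ^ (q + 1) = -(-1 : ℝ) ^ q := by rw [pow_succ]; ring
        have hrw : (-1 : ℝ) ^ (q + 1) *
            (t * (t * deg (a₂ * (ℓ ^ (r - 2 * (q + 1)) * a₂))) + 2 * (t * 0) +
              deg ((u : A) * (ℓ ^ (r - 2 * q) * (u : A)))) =
            t * t * ((-1 : ℝ) ^ (q + 1) * deg (a₂ * (ℓ ^ (r - 2 * (q + 1)) * a₂))) +
              -((-1 : ℝ) ^ q * deg ((u : A) * (ℓ ^ (r - 2 * q) * (u : A)))) := by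
          rw [hs]; ring
        rw [hrw]
        rcases eq_or_ne u 0 with hu0 | hu0
        · have hcu : (u : A) = 0 := by rw [hu0]; rfl
          have ht0 : t ≠ 0 := by
            rintro rfl
            apply hx0
            rw [← heqx, hzeq, hcu]
            simp
          rw [hcu]
          simp only [zero_mul, map_zero, mul_zero, neg_zero, add_zero]
          nlinarith [ha₂neg, mul_self_pos.mpr ht0]
        · have h2 := hpos' u hu hu0
          nlinarith [mul_self_nonneg t, ha₂neg]
      -- span{a₂} is disjoint from ℓ·P'
      have hspan_disj : ∀ x ∈ (ℝ ∙ a₂),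
          x ∈ (P'.map (R q).subtype).map (LinearMap.mulLeft ℝ ℓ) → x = 0 := by
        intro x hx1 hx2
        obtain ⟨t, rfl⟩ := Submodule.mem_span_singleton.mp hx1
        obtain ⟨w, hw, hweq⟩ := hx2
        by_contra hx0
        have ht0 : t ≠ 0 := by rintro rfl; apply hx0; simp
        have h2 : ℓ * w = t • a₂ := hweq
        have h1 : a₂ + ℓ * (-(t⁻¹ • w)) = 0 := by
          rw [mul_neg, mul_smul_comm, h2, smul_smul, inv_mul_cancel₀ ht0, one_smul]
          ring
        obtain ⟨h3, -⟩ := HRaux.prim_unique R hHL hq ha₂R ha₂prim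
          (Submodule.neg_mem _ (Submodule.smul_mem _ _ (hPA''le hw))) h1
        exact ha₂0 h3
      have hfrLP' : finrank ℝ ((P'.map (R q).subtype).map (LinearMap.mulLeft ℝ ℓ)) =
          finrank ℝ P' := by
        rw [HRaux.finrank_map_mulLeft R hHL hq2 _ hPA''le, HRaux.finrank_map_subtype]
      have hfrN₂ : finrank ℝ ↥((ℝ ∙ a₂) ⊔
          (P'.map (R q).subtype).map (LinearMap.mulLeft ℝ ℓ)) = 1 + finrank ℝ P' := by
        have hinf : (ℝ ∙ a₂) ⊓ (P'.map (R q).subtype).map (LinearMap.mulLeft ℝ ℓ) = ⊥ := by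
          rw [eq_bot_iff]
          rintro x ⟨hx1, hx2⟩
          rw [Submodule.mem_bot]
          exact hspan_disj x hx1 hx2
        have h := Submodule.finrank_sup_add_finrank_inf_eq (ℝ ∙ a₂)
          ((P'.map (R q).subtype).map (LinearMap.mulLeft ℝ ℓ))
        rw [hinf, finrank_bot, add_zero, finrank_span_singleton ha₂0, hfrLP'] at h
        exact h
      -- P (positive) is disjoint from N₂ (negative)
      have hPAN₂ : ∀ x ∈ P.map (R (q + 1)).subtype,
          x ∈ (ℝ ∙ a₂) ⊔ (P'.map (R q).subtype).map (LinearMap.mulLeft ℝ ℓ) → x = 0 := by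
        intro x hx1 hx2
        by_contra hx0
        obtain ⟨u, hu, rfl⟩ := hx1
        have hu0 : u ≠ 0 := by
          rintro rfl
          apply hx0
          rfl
        have h1 := hpos u hu hu0
        have h2 := hN₂neg _ hx2 hx0
        have h3 : ((R (q + 1)).subtype u : A) = (u : A) := rfl
        rw [h3] at h2
        linarith
      have hsuble : P.map (R (q + 1)).subtype ⊔ ((ℝ ∙ a₂) ⊔
          (P'.map (R q).subtype).map (LinearMap.mulLeft ℝ ℓ)) ≤ R (q + 1) := by
        apply sup_le (Submodule.map_subtype_le _ _)
        apply sup_le _ hLP'le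
        rw [Submodule.span_singleton_le_iff_mem]
        exact ha₂R
      have hdisj2 : (P.map (R (q + 1)).subtype) ⊓ ((ℝ ∙ a₂) ⊔
          (P'.map (R q).subtype).map (LinearMap.mulLeft ℝ ℓ)) = ⊥ := by
        rw [eq_bot_iff]
        rintro x ⟨hx1, hx2⟩
        rw [Submodule.mem_bot]
        exact hPAN₂ x hx1 hx2
      have hcount : finrank ℝ (P.map (R (q + 1)).subtype) + finrank ℝ ↥((ℝ ∙ a₂) ⊔
          (P'.map (R q).subtype).map (LinearMap.mulLeft ℝ ℓ)) ≤ finrank ℝ (R (q + 1)) := by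
        have h := Submodule.finrank_sup_add_finrank_inf_eq (P.map (R (q + 1)).subtype)
          ((ℝ ∙ a₂) ⊔ (P'.map (R q).subtype).map (LinearMap.mulLeft ℝ ℓ))
        rw [hdisj2, finrank_bot, add_zero] at h
        rw [← h]
        exact Submodule.finrank_mono hsuble
      rw [HRaux.finrank_map_subtype, hfrN₂] at hcount
      have e1 : finrank ℝ P + finrank ℝ N = finrank ℝ (R (q + 1)) :=
        Submodule.finrank_add_eq_of_isCompl hc
      have e2 : finrank ℝ P' + finrank ℝ N' = finrank ℝ (R q) :=
        Submodule.finrank_add_eq_of_isCompl hc'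
      have key := HRaux.sum_alt_succ (fun p => (finrank ℝ (R p) : ℤ)) q
      have hcount' : (finrank ℝ P : ℤ) + (1 + (finrank ℝ P' : ℤ)) ≤
          (finrank ℝ (R (q + 1)) : ℤ) := by exact_mod_cast hcount
      have e1' : (finrank ℝ P : ℤ) + (finrank ℝ N : ℤ) = (finrank ℝ (R (q + 1)) : ℤ) := by
        exact_mod_cast e1
      have e2' : (finrank ℝ P' : ℤ) + (finrank ℝ N' : ℤ) = (finrank ℝ (R q) : ℤ) := by
        exact_mod_cast e2
      linarith [hdim, hdim', key, hcount', e1', e2']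
end

section
/- For nonnegative integers q ≤ r_1 ≤ r_2, the (q+1)×(q+1) matrix with entries a_{ij} = binom(r_1+r_2−2q, r_1−i−j), 0 ≤ i,j ≤ q, has determinant of sign (−1)^{q(q+1)/2}; that is, (−1)^{q(q+1)/2} det[a_{ij}] > 0. -/
open Matrix Finset Equiv

/-- Entry of the Toeplitz matrix of `(1+x)^n`: `C(n, c - s)`, zero if `c < s`. -/
private def ent (n s c : ℕ) : ℤ := if s ≤ c then (n.choose (c - s) : ℤ) else 0

private lemma ent_pascal (n s c : ℕ) : ent (n + 1) s c = ent n s c + ent n (s + 1) c := by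
  unfold ent
  rcases lt_trichotomy c s with h | h | h
  · rw [if_neg (by omega), if_neg (by omega), if_neg (by omega)]; ring
  · subst h
    rw [if_pos le_rfl, if_pos le_rfl, if_neg (by omega)]
    simp
  · rw [if_pos (by omega), if_pos (by omega), if_pos (by omega)]
    have hk : c - s = (c - (s + 1)) + 1 := by omega
    rw [hk, Nat.choose_succ_succ]
    push_cast
    ring

/-- Main induction: minors of the Toeplitz matrix of `(1+x)^n` are nonnegative, and
positive when the diagonal entries are positive. -/
private lemma binMat_det (n : ℕ) : ∀ (m : ℕ) (r c : Fin m → ℕ), StrictMono r → StrictMono c →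
    0 ≤ (Matrix.of fun i j => ent n (r i) (c j)).det ∧
    ((∀ i, r i ≤ c i ∧ c i ≤ r i + n) →
      0 < (Matrix.of fun i j => ent n (r i) (c j)).det) := by
  induction n with
  | zero =>
    intro m r c hr hc
    have hent : ∀ s t : ℕ, ent 0 s t = if s = t then 1 else 0 := by
      intro s t
      unfold ent
      rcases lt_trichotomy s t with h | h | h
      · rw [if_pos (by omega), if_neg (by omega)]
        rw [Nat.choose_eq_zero_of_lt (by omega)]
        simp
      · subst h; simp
      · rw [if_neg (by omega), if_neg (by omega)]
    have hid : r = c → (Matrix.of fun i j => ent 0 (r i) (c j)).det = 1 := by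
      intro h
      subst h
      have : (Matrix.of fun i j => ent 0 (r i) (r j)) = (1 : Matrix (Fin m) (Fin m) ℤ) := by
        ext i j
        rw [Matrix.of_apply, hent, Matrix.one_apply]
        by_cases hij : i = j
        · simp [hij]
        · rw [if_neg (fun h => hij (hr.injective h)), if_neg hij]
      rw [this, Matrix.det_one]
    constructor
    · by_cases hall : ∀ j, ∃ i, r i = c j
      · -- each column hits: then c = r
        choose σ hσ using hall
        have hσm : StrictMono σ := by
          intro a b hab
          have : r (σ a) < r (σ b) := by rw [hσ a, hσ b]; exact hc hab
          exact hr.lt_iff_lt.mp this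
        have hσs : Function.Surjective σ :=
          Finite.surjective_of_injective hσm.injective
        have hσid : σ = id := by
          have hrange : Set.range σ = Set.range (id : Fin m → Fin m) := by
            rw [Set.range_id]
            exact Set.range_eq_univ.mpr hσs
          exact (hσm.range_inj strictMono_id).mp hrange
        have hrc : r = c := by
          funext j
          rw [← hσ j, hσid, id]
        rw [hid hrc]; norm_num
      · push_neg at hall
        obtain ⟨j, hj⟩ := hall
        rw [Matrix.det_eq_zero_of_column_eq_zero j (fun i => by
          rw [Matrix.of_apply, hent, if_neg (hj i)])]
    · intro hdiag
      have hrc : r = c := funext fun i => by have := hdiag i; omega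
      rw [hid hrc]; norm_num
  | succ n ih =>
    intro m r c hr hc
    classical
    -- the matrix is the sum over rows of two shifted matrices
    set x : Matrix (Fin m) (Fin m) ℤ := Matrix.of fun i j => ent n (r i) (c j) with hx
    set y : Matrix (Fin m) (Fin m) ℤ := Matrix.of fun i j => ent n (r i + 1) (c j) with hy
    have hsum : (Matrix.of fun i j => ent (n + 1) (r i) (c j)) = x + y := by
      ext i j
      simp only [Matrix.add_apply, hx, hy, Matrix.of_apply]
      exact ent_pascal n (r i) (c j)
    have hdet : (Matrix.of fun i j => ent (n + 1) (r i) (c j)).det =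
        ∑ s : Finset (Fin m), (Matrix.of fun i j =>
          ent n (if i ∈ s then r i else r i + 1) (c j)).det := by
      rw [hsum]
      have key := (Matrix.detRowAlternating :
        (Fin m → ℤ) [⋀^Fin m]→ₗ[ℤ] ℤ).toMultilinearMap.map_add_univ x y
      refine key.trans (Finset.sum_congr rfl fun s _ => ?_)
      have hpiece : s.piecewise x y = Matrix.of fun i j =>
          ent n (if i ∈ s then r i else r i + 1) (c j) := by
        funext i j
        by_cases his : i ∈ s <;> simp [Finset.piecewise, his, hx, hy]
      rw [hpiece]
      rfl
    -- each summand is nonneg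
    have hterm : ∀ s : Finset (Fin m),
        0 ≤ (Matrix.of fun i j =>
          ent n (if i ∈ s then r i else r i + 1) (c j)).det := by
      intro s
      by_cases hmono : StrictMono (fun i => if i ∈ s then r i else r i + 1)
      · exact (ih m (fun i => if i ∈ s then r i else r i + 1) c hmono hc).1
      · -- some pair violates monotonicity; then two rows coincide
        simp only [StrictMono] at hmono
        push_neg at hmono
        obtain ⟨a, b, hab, hba⟩ := hmono
        have hreq : (if a ∈ s then r a else r a + 1) = (if b ∈ s then r b else r b + 1) := by
          have h1 : r a < r b := hr hab
          have h2 : (if a ∈ s then r a else r a + 1) ≤ r a + 1 := by split <;> omega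
          have h3 : r b ≤ (if b ∈ s then r b else r b + 1) := by split <;> omega
          omega
        rw [Matrix.det_zero_of_row_eq (ne_of_lt hab) (funext fun j => by
          show ent n (if a ∈ s then r a else r a + 1) (c j)
            = ent n (if b ∈ s then r b else r b + 1) (c j)
          rw [hreq])]
    rw [hdet]
    constructor
    · exact Finset.sum_nonneg fun s _ => hterm s
    · intro hdiag
      -- the distinguished term: shift by one exactly where `c i > r i`
      set s₀ : Finset (Fin m) := Finset.univ.filter (fun i => c i = r i) with hs₀
      have hmem : ∀ i, i ∈ s₀ ↔ c i = r i := by intro i; simp [hs₀]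
      have hrsval : ∀ i, (if i ∈ s₀ then r i else r i + 1)
          = if c i = r i then r i else r i + 1 := by
        intro i
        by_cases h : c i = r i
        · rw [if_pos ((hmem i).mpr h), if_pos h]
        · rw [if_neg (fun hh => h ((hmem i).mp hh)), if_neg h]
      have hmono : StrictMono (fun i => if i ∈ s₀ then r i else r i + 1) := by
        intro a b hab
        have h1 : r a < r b := hr hab
        have h2 : c a < c b := hc hab
        have h3 : r a ≤ c a := (hdiag a).1
        have h4 : r b ≤ c b := (hdiag b).1
        simp only [hrsval]
        split <;> split <;> omega
      have hdiag' : ∀ i, (if i ∈ s₀ then r i else r i + 1) ≤ c i ∧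
          c i ≤ (if i ∈ s₀ then r i else r i + 1) + n := by
        intro i
        have h3 := (hdiag i).1
        have h4 := (hdiag i).2
        rw [hrsval i]
        split <;> omega
      have hpos := (ih m (fun i => if i ∈ s₀ then r i else r i + 1) c hmono hc).2 hdiag'
      exact Finset.sum_pos' (fun s _ => hterm s) ⟨s₀, Finset.mem_univ _, hpos⟩

private lemma two_mul_half_pred (n : ℕ) : 2 * (n * (n - 1) / 2) = n * (n - 1) :=
  Nat.two_mul_div_two_of_even (Nat.even_mul_pred_self n)

/-- Sign of the order-reversing permutation of `Fin n`. -/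
private lemma sign_revPerm_fin : ∀ n : ℕ,
    Equiv.Perm.sign (Fin.revPerm : Equiv.Perm (Fin n)) = (-1 : ℤˣ) ^ (n * (n - 1) / 2)
  | 0 => by
    rw [Subsingleton.elim (Fin.revPerm : Equiv.Perm (Fin 0)) 1]
    simp
  | (n + 1) => by
    set E : Equiv.Perm (Fin (n + 1)) :=
      (finSuccEquivLast.symm.permCongr) (Equiv.optionCongr (Fin.revPerm : Equiv.Perm (Fin n)))
      with hE
    have hdec : (Fin.revPerm : Equiv.Perm (Fin (n + 1))) = finRotate (n + 1) * E := by
      ext i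
      refine Fin.lastCases ?_ (fun k => ?_) i
      · -- i = last
        simp only [Equiv.Perm.mul_apply, hE, Equiv.permCongr_apply, Equiv.symm_symm,
          finSuccEquivLast_last, Equiv.optionCongr_apply, Option.map_none,
          finSuccEquivLast_symm_none, finRotate_succ_apply, Fin.revPerm_apply, Fin.rev_last]
        rw [Fin.last_add_one]
      · -- i = castSucc k
        simp only [Equiv.Perm.mul_apply, hE, Equiv.permCongr_apply, Equiv.symm_symm,
          finSuccEquivLast_castSucc, Equiv.optionCongr_apply, Option.map_some,
          finSuccEquivLast_symm_some, finRotate_succ_apply, Fin.revPerm_apply]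
        rw [Fin.coeSucc_eq_succ, Fin.rev_castSucc]
    rw [hdec, _root_.map_mul, sign_finRotate, hE, Equiv.Perm.sign_permCongr,
      Equiv.optionCongr_sign, sign_revPerm_fin n, ← pow_add]
    congr 1
    have h2 := two_mul_half_pred n
    have h3 := two_mul_half_pred (n + 1)
    have h4 : (n + 1) * (n + 1 - 1) = n * (n - 1) + 2 * n := by
      cases n with
      | zero => rfl
      | succ k =>
        simp only [Nat.add_sub_cancel]
        ring
    omega

/-- For `q ≤ r₁ ≤ r₂`, the `(q+1)×(q+1)` matrix with entries
`a_{ij} = binom(r₁+r₂-2q, r₁-i-j)` (zero when `i+j > r₁`, matching the convention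
`binom(n,k) = 0` for `k < 0`) has determinant of sign `(-1)^{q(q+1)/2}`. -/
theorem binomial_matrix_det_sign (q r₁ r₂ : ℕ) (h₁ : q ≤ r₁) (h₂ : r₁ ≤ r₂) :
    0 < (-1 : ℤ) ^ (q * (q + 1) / 2) *
      (Matrix.of fun i j : Fin (q + 1) =>
        if (i : ℕ) + (j : ℕ) ≤ r₁
        then ((r₁ + r₂ - 2 * q).choose (r₁ - (i : ℕ) - (j : ℕ)) : ℤ)
        else 0).det := by
  set n : ℕ := r₁ + r₂ - 2 * q with hn
  set O : Matrix (Fin (q + 1)) (Fin (q + 1)) ℤ := Matrix.of fun i j : Fin (q + 1) =>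
    if (i : ℕ) + (j : ℕ) ≤ r₁
    then ((r₁ + r₂ - 2 * q).choose (r₁ - (i : ℕ) - (j : ℕ)) : ℤ)
    else 0 with hO
  set M : Matrix (Fin (q + 1)) (Fin (q + 1)) ℤ :=
    Matrix.of fun i j : Fin (q + 1) => ent n (i : ℕ) (r₁ - q + (j : ℕ)) with hM
  have hMO : M = O.submatrix id Fin.revPerm := by
    ext i j
    have hi : (i : ℕ) ≤ q := Nat.lt_succ_iff.mp i.isLt
    have hj : (j : ℕ) ≤ q := Nat.lt_succ_iff.mp j.isLt
    have hrev : ((Fin.revPerm j : Fin (q + 1)) : ℕ) = q - (j : ℕ) := by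
      rw [Fin.revPerm_apply, Fin.val_rev]
      omega
    simp only [hM, hO, Matrix.submatrix_apply, Matrix.of_apply, id, hrev, ent]
    by_cases h : (i : ℕ) ≤ r₁ - q + (j : ℕ)
    · rw [if_pos h, if_pos (by omega), hn,
        show r₁ - q + (j : ℕ) - (i : ℕ) = r₁ - (i : ℕ) - (q - (j : ℕ)) from by omega]
    · rw [if_neg h, if_neg (by omega)]
  have hdetM : M.det = ((Equiv.Perm.sign (Fin.revPerm : Equiv.Perm (Fin (q + 1))) : ℤˣ) : ℤ)
      * O.det := by
    rw [hMO]
    exact_mod_cast Matrix.det_permute' Fin.revPerm O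
  have hsign : ((Equiv.Perm.sign (Fin.revPerm : Equiv.Perm (Fin (q + 1))) : ℤˣ) : ℤ)
      = (-1 : ℤ) ^ (q * (q + 1) / 2) := by
    rw [sign_revPerm_fin (q + 1)]
    rw [Units.val_pow_eq_pow_val, Units.coe_neg_one]
    congr 1
    rw [Nat.add_sub_cancel, Nat.mul_comm]
  have hMpos : 0 < M.det := by
    refine (binMat_det n (q + 1) (fun i => (i : ℕ)) (fun j => r₁ - q + (j : ℕ))
      (fun a b hab => by exact_mod_cast hab)
      (fun a b hab => by
        show r₁ - q + (a : ℕ) < r₁ - q + (b : ℕ)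
        have h : (a : ℕ) < (b : ℕ) := hab
        omega)).2 ?_
    intro i
    constructor
    · omega
    · have hi : (i : ℕ) ≤ q := Nat.lt_succ_iff.mp i.isLt
      omega
  have h1 : ((-1 : ℤ) ^ (q * (q + 1) / 2)) * ((Equiv.Perm.sign
      (Fin.revPerm : Equiv.Perm (Fin (q + 1))) : ℤˣ) : ℤ) = 1 := by
    rw [hsign, ← pow_add, ← two_mul, pow_mul]
    norm_num
  calc (0 : ℤ) < M.det := hMpos
    _ = ((Equiv.Perm.sign (Fin.revPerm : Equiv.Perm (Fin (q + 1))) : ℤˣ) : ℤ) * O.det := hdetM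
    _ = _ := by rw [hsign]
end

section
/- Let R* be a Poincaré duality algebra of dimension r ≥ 2 satisfying HR(ℓ_2) for some ℓ_2 ∈ R^1. Then for any ℓ_1 ∈ R^1: deg(ℓ_1² ℓ_2^{r−2}) · deg(ℓ_2^r) ≤ deg(ℓ_1 ℓ_2^{r−1})², with strict inequality when ℓ_1 is not a scalar multiple of ℓ_2 and deg(ℓ_2^r) > 0. -/
open Module

/-- Khovanskii–Teissier type inequality. Let `R*` be a Poincaré duality
algebra of dimension `r ≥ 2` satisfying `HR(ℓ₂)` for some `ℓ₂ ∈ R^1`.  Then for any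
`ℓ₁ ∈ R^1`, `deg(ℓ₁² ℓ₂^{r-2}) · deg(ℓ₂^r) ≤ deg(ℓ₁ ℓ₂^{r-1})²`, with strict inequality
when `ℓ₁` is not a scalar multiple of `ℓ₂` and `deg(ℓ₂^r) > 0`. -/
theorem khovanskii_teissier {A : Type*} [CommRing A] [Algebra ℝ A]
    [FiniteDimensional ℝ A] (R : ℕ → Submodule ℝ A) [GradedAlgebra R] (r : ℕ)
    (hr : 2 ≤ r) (hPD : IsPDAlgebra R r) (deg : A →ₗ[ℝ] ℝ) (hdeg : IsDegreeMap R r deg)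
    (ℓ₁ ℓ₂ : A) (h₁ : ℓ₁ ∈ R 1) (h₂ : ℓ₂ ∈ R 1)
    (hHR : HodgeRiemann R r deg ℓ₂) :
    deg (ℓ₁ ^ 2 * ℓ₂ ^ (r - 2)) * deg (ℓ₂ ^ r) ≤ deg (ℓ₁ * ℓ₂ ^ (r - 1)) ^ 2 ∧
    ((∀ c : ℝ, ℓ₁ ≠ c • ℓ₂) → 0 < deg (ℓ₂ ^ r) →
      deg (ℓ₁ ^ 2 * ℓ₂ ^ (r - 2)) * deg (ℓ₂ ^ r) < deg (ℓ₁ * ℓ₂ ^ (r - 1)) ^ 2) := by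
  set p := deg (ℓ₁ ^ 2 * ℓ₂ ^ (r - 2)) with hp
  set m := deg (ℓ₁ * ℓ₂ ^ (r - 1)) with hm
  set D := deg (ℓ₂ ^ r) with hD
  -- A is nontrivial
  have hnt : Nontrivial A := by
    rcases subsingleton_or_nontrivial A with h | h
    · exfalso
      have : Subsingleton (R 0) := ⟨fun a b => Subtype.ext (Subsingleton.elim _ _)⟩
      have h0 := hPD.1
      rw [finrank_zero_of_subsingleton] at h0
      omega
    · exact h
  -- D > 0 from HR at q = 0
  have hDpos : 0 < D := by
    have h1mem : (1 : A) ∈ R 0 := SetLike.one_mem_graded R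
    have hvanish : ℓ₂ ^ (r - 2 * 0 + 1) * 1 = 0 := by
      have : ℓ₂ ^ (r - 2 * 0 + 1) ∈ R (r + 1) := by
        simpa using SetLike.pow_mem_graded (r + 1) h₂
      rw [hPD.2.2.1 (r + 1) (by omega)] at this
      simpa using this
    have := hHR 0 (by omega) 1 h1mem one_ne_zero hvanish
    simpa using this
  -- the primitive part of ℓ₁
  set c : ℝ := m / D with hc
  have hcD : c * D = m := div_mul_cancel₀ m (ne_of_gt hDpos)
  set a : A := ℓ₁ - c • ℓ₂ with ha
  have hamem : a ∈ R 1 := sub_mem h₁ (Submodule.smul_mem _ _ h₂)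
  -- power identities
  have hpow1 : ℓ₂ ^ (r - 2) * ℓ₂ = ℓ₂ ^ (r - 1) := by
    rw [← pow_succ]; congr 1; omega
  have hpow2 : ℓ₂ ^ (r - 2) * ℓ₂ ^ 2 = ℓ₂ ^ r := by
    rw [← pow_add]; congr 1; omega
  -- expansion of the Hodge-Riemann form value on a
  have hexp : deg (a * (ℓ₂ ^ (r - 2) * a)) = p - 2 * c * m + c ^ 2 * D := by
    have key : a * (ℓ₂ ^ (r - 2) * a)
        = ℓ₁ ^ 2 * ℓ₂ ^ (r - 2) - (2 * c) • (ℓ₁ * ℓ₂ ^ (r - 1))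
          + (c ^ 2) • ℓ₂ ^ r := by
      rw [ha, ← hpow1, ← hpow2]
      simp only [Algebra.smul_def, map_mul, map_pow, map_ofNat]
      ring
    rw [key, map_add, map_sub, map_smul, map_smul]
    simp only [smul_eq_mul, ← hp, ← hm, ← hD]
    try ring
  -- key dichotomy
  have hkey : a = 0 ∨ p * D < m ^ 2 := by
    rcases eq_or_ne a 0 with h | h
    · exact Or.inl h
    · right
      have hprim : ℓ₂ ^ (r - 2 * 1 + 1) * a = 0 := by
        have hmem : ℓ₂ ^ (r - 2 * 1 + 1) * a ∈ R r := by
          have := SetLike.mul_mem_graded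
            (SetLike.pow_mem_graded (r - 2 * 1 + 1) h₂) hamem
          simp only [smul_eq_mul, mul_one] at this
          have hre : r - 2 * 1 + 1 + 1 = r := by omega
          rwa [hre] at this
        apply hdeg.1 _ hmem
        have hre : r - 2 * 1 + 1 = r - 1 := by omega
        rw [hre]
        have key : ℓ₂ ^ (r - 1) * a = ℓ₁ * ℓ₂ ^ (r - 1) - c • ℓ₂ ^ r := by
          rw [ha, ← hpow1, ← hpow2]
          simp only [Algebra.smul_def, map_mul, map_pow]
          ring
        rw [key, map_sub, map_smul, smul_eq_mul, ← hm, ← hD]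
        linarith [hcD]
      have hQ := hHR 1 (by omega) a hamem h hprim
      have hre : r - 2 * 1 = r - 2 := by omega
      rw [hre, hexp] at hQ
      simp only [pow_one] at hQ
      nlinarith [hcD, hDpos, hQ]
  constructor
  · rcases hkey with h | h
    · -- a = 0 : equality
      have hl : ℓ₁ = c • ℓ₂ := by
        have := sub_eq_zero.mp h
        linear_combination (norm := module) this
      have e1 : (c • ℓ₂) ^ 2 * ℓ₂ ^ (r - 2) = (c ^ 2) • ℓ₂ ^ r := by
        rw [← hpow2]
        simp only [Algebra.smul_def, map_pow]
        ring
      have e2 : (c • ℓ₂) * ℓ₂ ^ (r - 1) = c • ℓ₂ ^ r := by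
        rw [← hpow2, ← hpow1]
        simp only [Algebra.smul_def]
        ring
      have hpval : p = c ^ 2 * D := by
        rw [hp, hl, e1, map_smul, smul_eq_mul, ← hD]
      have hmval : m = c * D := by
        rw [hm, hl, e2, map_smul, smul_eq_mul, ← hD]
      rw [hpval, hmval]; nlinarith [hDpos]
    · linarith
  · intro hne _
    rcases hkey with h | h
    · exact absurd (sub_eq_zero.mp h) (fun hh => hne c hh)
    · exact h
end
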